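/- arXiv:0910.5130 — 3 statements merged into one kernel-verified Lean document; each statement's English description precedes it below -/
import Mathlib

section
/- Let p = 2 or p = 3, and let K be an algebraically closed field of characteristic p. An elliptic curve E over K is supersingular (i.e. its group of K-points has trivial p-torsion) if and only if j(E) = 0. (In the notation of the supersingular polynomial: for p = 2 or 3 one may take Φ(j) = j.) -/
open WeierstrassCurve Polynomial WeierstrassCurve.Affine WeierstrassCurve.Affine.Point

private lemma quadRoot {K : Type} [Field K] [IsAlgClosed K] (b c : K) :
    ∃ y : K, y ^ 2 + b * y + c = 0 := by
  obtain ⟨y, hy⟩ := IsAlgClosed.exists_root (C 1 * X ^ 2 + C b * X + C c)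
    (by rw [Polynomial.degree_quadratic one_ne_zero]; decide)
  refine ⟨y, ?_⟩
  have := hy
  simp only [Polynomial.IsRoot, eval_add, eval_mul, eval_pow, eval_C, eval_X, one_mul] at this
  exact this

private lemma hd_ne {K : Type} [Field K] (W : WeierstrassCurve.Affine K) {x y : K}
    (hy : y ≠ W.negY x y) : 2 * y + W.a₁ * x + W.a₃ ≠ 0 := by
  intro h
  exact hy (by simp only [WeierstrassCurve.Affine.negY]; linear_combination h)

private lemma core3 {K : Type} [Field K] (W : WeierstrassCurve.Affine K) (h3 : (3 : K) = 0)
    {x y : K} (e : W.Equation x y) :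
    (3*x^2 + 2*W.a₂*x + W.a₄ - W.a₁*y)^2
      + W.a₁*(3*x^2 + 2*W.a₂*x + W.a₄ - W.a₁*y)*(2*y + W.a₁*x + W.a₃)
      - W.a₂*(2*y + W.a₁*x + W.a₃)^2 - 3*x*(2*y + W.a₁*x + W.a₃)^2
    = -(W.b₂ * x^3 + W.b₈) := by
  rw [WeierstrassCurve.Affine.equation_iff] at e
  simp only [WeierstrassCurve.b₂, WeierstrassCurve.b₈]
  linear_combination (-(W.a₁^2 + 4*W.a₂) - 12*x) * e
    - (x^4 + (2*W.a₄ + W.a₁*W.a₃)*x^2 + (W.a₃^2 + 4*W.a₆)*x) * h3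

private lemma addX_eq' {K : Type} [Field K] (a1 a2 n d x L : K) (hd : d ≠ 0)
    (hL : L = n / d) :
    L^2 + a1*L - a2 - x - x = x + (n^2 + a1*n*d - a2*d^2 - 3*x*d^2) / d^2 := by
  subst hL; field_simp; ring

private lemma addX_eq {K : Type} [Field K] [DecidableEq K] (W : WeierstrassCurve.Affine K) {x y : K}
    (hy : y ≠ W.negY x y) :
    W.addX x x (W.slope x x y y) = x +
      ((3*x^2 + 2*W.a₂*x + W.a₄ - W.a₁*y)^2
        + W.a₁*(3*x^2 + 2*W.a₂*x + W.a₄ - W.a₁*y)*(2*y + W.a₁*x + W.a₃)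
        - W.a₂*(2*y + W.a₁*x + W.a₃)^2 - 3*x*(2*y + W.a₁*x + W.a₃)^2)
      / (2*y + W.a₁*x + W.a₃)^2 := by
  have hd := hd_ne W hy
  have hds : W.slope x x y y
      = (3*x^2 + 2*W.a₂*x + W.a₄ - W.a₁*y) / (2*y + W.a₁*x + W.a₃) := by
    rw [WeierstrassCurve.Affine.slope_of_Y_ne rfl hy]
    simp only [WeierstrassCurve.Affine.negY]
    congr 1
    ring
  simp only [WeierstrassCurve.Affine.addX]
  exact addX_eq' _ _ _ _ _ _ hd hds

private lemma lemA {K : Type} [Field K] [DecidableEq K] (W : WeierstrassCurve.Affine K) (h3 : (3 : K) = 0)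
    {x y : K} (e : W.Equation x y) (hy : y ≠ W.negY x y)
    (hx : W.addX x x (W.slope x x y y) = x) : W.b₂ * x^3 + W.b₈ = 0 := by
  have hd := hd_ne W hy
  rw [addX_eq W hy, core3 W h3 e] at hx
  have h0 : -(W.b₂ * x ^ 3 + W.b₈) / (2*y + W.a₁*x + W.a₃)^2 = 0 := by
    linear_combination hx
  rcases div_eq_zero_iff.mp h0 with h | h
  · linear_combination -h
  · exact absurd h (pow_ne_zero 2 hd)

private lemma lemB {K : Type} [Field K] [DecidableEq K] (W : WeierstrassCurve.Affine K) (h3 : (3 : K) = 0)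
    {x y : K} (e : W.Equation x y) (hy : y ≠ W.negY x y)
    (hpsi : W.b₂ * x^3 + W.b₈ = 0) : W.addX x x (W.slope x x y y) = x := by
  rw [addX_eq W hy, core3 W h3 e, hpsi, _root_.neg_zero, zero_div, add_zero]

private lemma lemC {K : Type} [Field K] (W : WeierstrassCurve.Affine K) (h3 : (3 : K) = 0)
    {x y : K} (e : W.Equation x y) (hy : y = W.negY x y)
    (hpsi : W.b₂ * x^3 + W.b₈ = 0) : W.Δ = 0 := by
  rw [WeierstrassCurve.Affine.equation_iff] at e
  have hd0 : 2*y + W.a₁*x + W.a₃ = 0 := by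
    simp only [WeierstrassCurve.Affine.negY] at hy; linear_combination hy
  simp only [WeierstrassCurve.b₂, WeierstrassCurve.b₈] at hpsi
  simp only [WeierstrassCurve.Δ, WeierstrassCurve.b₂, WeierstrassCurve.b₄,
    WeierstrassCurve.b₆, WeierstrassCurve.b₈]
  linear_combination
    ((((W.a₁^2 + 4*W.a₂)*x + (2*W.a₄ + W.a₁*W.a₃))*(W.a₁^2 + 4*W.a₂)) * (2*y + W.a₁*x + W.a₃)) * hd0
    - (4*(((W.a₁^2 + 4*W.a₂)*x + (2*W.a₄ + W.a₁*W.a₃))*(W.a₁^2 + 4*W.a₂))) * e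
    + (-((W.a₁^2 + 4*W.a₂)*x + (2*W.a₄ + W.a₁*W.a₃)) - (W.a₁^2 + 4*W.a₂)^2) * hpsi
    + (-((W.a₁^2 + 4*W.a₂)*x + (2*W.a₄ + W.a₁*W.a₃))*((W.a₁^2 + 4*W.a₂)*x^3 + (W.a₁^2 + 4*W.a₂)*(2*W.a₄ + W.a₁*W.a₃)*x + (W.a₁^2*W.a₆ + 4*W.a₂*W.a₆ - W.a₁*W.a₃*W.a₄ + W.a₂*W.a₃^2 - W.a₄^2)) - 3*(2*W.a₄ + W.a₁*W.a₃)^3 - 9*(W.a₃^2 + 4*W.a₆)^2 + 3*(W.a₁^2 + 4*W.a₂)*(2*W.a₄ + W.a₁*W.a₃)*(W.a₃^2 + 4*W.a₆)) * h3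

open Classical in
/-- Let `p = 2` or `p = 3` and let `K` be an algebraically closed field of
characteristic `p`. An elliptic curve `E` over `K` is supersingular (i.e. its group of
`K`-points has trivial `p`-torsion) if and only if `j(E) = 0`. -/
theorem supersingular_iff_j_eq_zero_of_char_two_or_three (p : ℕ) (hp : p = 2 ∨ p = 3)
    (K : Type) [Field K] [IsAlgClosed K] [CharP K p]
    (E : WeierstrassCurve K) [E.IsElliptic] :
    (∀ P : E.toAffine.Point, p • P = 0 → P = 0) ↔ E.j = 0 := by
  have hΔ : E.Δ ≠ 0 := E.isUnit_Δ.ne_zero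
  obtain rfl | rfl := hp
  · -- characteristic 2
    have h2 : (2 : K) = 0 := by exact_mod_cast CharP.cast_eq_zero K 2
    constructor
    · intro h
      rw [E.j_eq_zero_iff_of_char_two]
      by_contra ha1
      obtain ⟨y₀, hy₀⟩ := quadRoot (E.a₁ * (E.a₃ / E.a₁) + E.a₃)
        (-(((E.a₃ / E.a₁))^3 + E.a₂*((E.a₃ / E.a₁))^2 + E.a₄*((E.a₃ / E.a₁)) + E.a₆))
      have heq : E.toAffine.Equation (E.a₃ / E.a₁) y₀ := by
        rw [WeierstrassCurve.Affine.equation_iff]; linear_combination hy₀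
      have hns := (E.toAffine.equation_iff_nonsingular_of_Δ_ne_zero hΔ).mp heq
      have hxv : E.a₁ * (E.a₃ / E.a₁) = E.a₃ := by field_simp
      have hyEq : y₀ = E.toAffine.negY (E.a₃ / E.a₁) y₀ := by
        simp only [WeierstrassCurve.Affine.negY]
        linear_combination y₀ * h2 + hxv + E.a₃ * h2
      have := h (WeierstrassCurve.Affine.Point.some _ _ hns)
        (by rw [two_nsmul]; exact WeierstrassCurve.Affine.Point.add_self_of_Y_eq hyEq)
      exact WeierstrassCurve.Affine.Point.some_ne_zero hns this
    · intro hj P hP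
      rw [E.j_eq_zero_iff_of_char_two] at hj
      rcases P with _ | @⟨x, y, h⟩
      · rfl
      rw [two_nsmul] at hP
      by_cases hy : y = E.toAffine.negY x y
      · exfalso
        have ha3 : E.a₃ = 0 := by
          simp only [WeierstrassCurve.Affine.negY] at hy
          linear_combination hy - y * h2 - x * hj
        apply hΔ
        have hb2 : E.b₂ = 0 := by
          simp only [WeierstrassCurve.b₂]; linear_combination 2*E.a₂*h2 + E.a₁*hj
        have hb4 : E.b₄ = 0 := by
          simp only [WeierstrassCurve.b₄]; linear_combination E.a₄*h2 + E.a₃*hj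
        have hb6 : E.b₆ = 0 := by
          simp only [WeierstrassCurve.b₆]; linear_combination 2*E.a₆*h2 + E.a₃*ha3
        show -E.b₂^2*E.b₈ - 8*E.b₄^3 - 27*E.b₆^2 + 9*E.b₂*E.b₄*E.b₆ = 0
        rw [hb2, hb4, hb6]; ring
      · rw [WeierstrassCurve.Affine.Point.add_self_of_Y_ne hy] at hP
        exact absurd hP (WeierstrassCurve.Affine.Point.some_ne_zero _)
  · -- characteristic 3
    have h3 : (3 : K) = 0 := by exact_mod_cast CharP.cast_eq_zero K 3
    constructor
    · intro h
      by_contra hj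
      have hb2 : E.b₂ ≠ 0 := fun hb => hj (E.j_eq_zero_of_char_three hb)
      obtain ⟨x₀, hx₀⟩ := IsAlgClosed.exists_pow_nat_eq (-E.b₈ / E.b₂) (n := 3) (by norm_num)
      have hpsi : E.b₂ * x₀^3 + E.b₈ = 0 := by rw [hx₀]; field_simp; ring
      obtain ⟨y₀, hy₀⟩ := quadRoot (E.a₁ * x₀ + E.a₃)
        (-(x₀^3 + E.a₂*x₀^2 + E.a₄*x₀ + E.a₆))
      have heq : E.toAffine.Equation x₀ y₀ := by
        rw [WeierstrassCurve.Affine.equation_iff]; linear_combination hy₀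
      have hns := (E.toAffine.equation_iff_nonsingular_of_Δ_ne_zero hΔ).mp heq
      have hy : y₀ ≠ E.toAffine.negY x₀ y₀ := fun hyc => hΔ (lemC E.toAffine h3 heq hyc hpsi)
      have hx := lemB E.toAffine h3 heq hy hpsi
      have hyc : E.toAffine.addY x₀ x₀ y₀ (E.toAffine.slope x₀ x₀ y₀ y₀)
          = E.toAffine.negY x₀ y₀ := by
        simp only [WeierstrassCurve.Affine.addY, WeierstrassCurve.Affine.negAddY, hx,
          sub_self, mul_zero, zero_add]
      have h3P : 3 • WeierstrassCurve.Affine.Point.some _ _ hns = 0 := by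
        rw [succ_nsmul, two_nsmul, WeierstrassCurve.Affine.Point.add_self_of_Y_ne hy]
        exact WeierstrassCurve.Affine.Point.add_of_Y_eq hx hyc
      exact WeierstrassCurve.Affine.Point.some_ne_zero hns (h _ h3P)
    · intro hj P hP
      rw [E.j_eq_zero_iff_of_char_three] at hj
      rcases P with _ | @⟨x, y, h⟩
      · rfl
      rw [succ_nsmul, two_nsmul] at hP
      by_cases hy : y = E.toAffine.negY x y
      · rwa [WeierstrassCurve.Affine.Point.add_self_of_Y_eq hy, zero_add] at hP
      exfalso
      rw [WeierstrassCurve.Affine.Point.add_self_of_Y_ne hy] at hP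
      by_cases hx : E.toAffine.addX x x (E.toAffine.slope x x y y) = x
      · have hpsi := lemA E.toAffine h3 h.left hy hx
        rw [hj, zero_mul, zero_add] at hpsi
        apply hΔ
        have hrel : 4*E.b₈ = E.b₂*E.b₆ - E.b₄^2 := by
          simp only [WeierstrassCurve.b₂, WeierstrassCurve.b₄, WeierstrassCurve.b₆,
            WeierstrassCurve.b₈]; ring
        have hb4 : E.b₄^2 = 0 := by linear_combination E.b₆*hj - 4*hpsi + hrel
        have hb4' : E.b₄ = 0 := pow_eq_zero_iff two_ne_zero |>.mp hb4
        show -E.b₂^2*E.b₈ - 8*E.b₄^3 - 27*E.b₆^2 + 9*E.b₂*E.b₄*E.b₆ = 0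
        rw [hj, hb4', hpsi]
        linear_combination -9*E.b₆^2*h3
      · rw [WeierstrassCurve.Affine.Point.add_of_X_ne hx] at hP
        exact absurd hP (WeierstrassCurve.Affine.Point.some_ne_zero _)
end

section
/- Let p be a prime and R a commutative ring in which p·1 = 0. Let F and G be formal group laws over R and let φ : F → G be a homomorphism of formal group laws whose linear coefficient (the coefficient of T in φ) is 0. Then there exists a power series ψ ∈ R⟦T⟧ with zero constant term such that φ(T) = ψ(T^p) (equivalently, the coefficient of T^m in φ vanishes whenever p does not divide m); moreover ψ is a homomorphism of formal group laws from F^(p) to G, where F^(p) denotes the formal group law obtained from F by raising each coefficient to the p-th power. -/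
noncomputable section

/-- The total degree of a monomial exponent. -/
def FGL.degSum {σ : Type} (d : σ →₀ ℕ) : ℕ := d.sum fun _ n => n

/-- Substitution `F(a, b)` of the pair `(a, b)` into a two-variable power series
`F ∈ R⟦X,Y⟧`.  This is the legitimate substitution whenever `a` and `b` have zero
constant term, since then only finitely many monomials of `F` contribute to each
coefficient. -/
def FGL.subst2 {R : Type} [CommRing R] {σ : Type} (F : MvPowerSeries (Fin 2) R)
    (a b : MvPowerSeries σ R) : MvPowerSeries σ R :=
  fun d =>
    MvPowerSeries.coeff d
      (∑ q ∈ Finset.range (FGL.degSum d + 1) ×ˢ Finset.range (FGL.degSum d + 1),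
        MvPowerSeries.C (σ := σ) (R := R)
            (MvPowerSeries.coeff (Finsupp.single 0 q.1 + Finsupp.single 1 q.2) F) *
          (a ^ q.1 * b ^ q.2))

/-- Substitution `φ(s)` of `s` into a one-variable power series `φ ∈ R⟦T⟧`.  This is the
legitimate substitution whenever `s` has zero constant term. -/
def FGL.subst1 {R : Type} [CommRing R] {σ : Type} (φ : PowerSeries R)
    (s : MvPowerSeries σ R) : MvPowerSeries σ R :=
  fun d =>
    MvPowerSeries.coeff d
      (∑ k ∈ Finset.range (FGL.degSum d + 1),
        MvPowerSeries.C (σ := σ) (R := R) (PowerSeries.coeff k φ) * s ^ k)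

/-- `F ∈ R⟦X,Y⟧` is a (one-dimensional, commutative) formal group law over `R`:
`F(X,0) = X`, `F(0,Y) = Y`, `F(X,Y) = F(Y,X)` and `F(F(X,Y),Z) = F(X,F(Y,Z))`. -/
structure IsFGL {R : Type} [CommRing R] (F : MvPowerSeries (Fin 2) R) : Prop where
  substXzero : FGL.subst2 F (PowerSeries.X : MvPowerSeries Unit R) 0 = PowerSeries.X
  substZeroX : FGL.subst2 F 0 (PowerSeries.X : MvPowerSeries Unit R) = PowerSeries.X
  comm : FGL.subst2 F (MvPowerSeries.X (1 : Fin 2)) (MvPowerSeries.X (0 : Fin 2)) = F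
  assoc : FGL.subst2 F
      (FGL.subst2 F (MvPowerSeries.X (0 : Fin 3)) (MvPowerSeries.X (1 : Fin 3)))
        (MvPowerSeries.X (2 : Fin 3)) =
    FGL.subst2 F (MvPowerSeries.X (0 : Fin 3))
      (FGL.subst2 F (MvPowerSeries.X (1 : Fin 3)) (MvPowerSeries.X (2 : Fin 3)))

/-- `φ ∈ R⟦T⟧` is a homomorphism of formal group laws `F → G`: it has zero constant
term and satisfies `φ(F(X,Y)) = G(φ(X), φ(Y))`. -/
structure IsFGLHom {R : Type} [CommRing R] (F G : MvPowerSeries (Fin 2) R)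
    (φ : PowerSeries R) : Prop where
  constantCoeff_eq_zero : PowerSeries.constantCoeff φ = 0
  hom : FGL.subst1 φ F =
    FGL.subst2 G (FGL.subst1 φ (MvPowerSeries.X (0 : Fin 2)))
      (FGL.subst1 φ (MvPowerSeries.X (1 : Fin 2)))

end

noncomputable section

namespace FGL
open MvPowerSeries Finset

variable {R : Type} [CommRing R] {σ : Type}

theorem degSum_add (a b : σ →₀ ℕ) : degSum (a + b) = degSum a + degSum b := by
  classical
  simpa [degSum] using Finsupp.sum_add_index (by simp) (by simp)

theorem degSum_zero : degSum (0 : σ →₀ ℕ) = 0 := by simp [degSum]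

theorem degSum_eq_zero_iff {d : σ →₀ ℕ} : degSum d = 0 ↔ d = 0 := by
  classical
  constructor
  · intro h
    ext i
    simp only [Finsupp.coe_zero, Pi.zero_apply]
    by_contra hi
    have hmem : i ∈ d.support := Finsupp.mem_support_iff.mpr hi
    have : d i ≤ degSum d := Finset.single_le_sum (f := fun i => d i) (by intros; positivity) hmem
    omega
  · rintro rfl; simp [degSum]

theorem degSum_single (i : σ) (n : ℕ) : degSum (Finsupp.single i n) = n := by
  classical simp [degSum, Finsupp.sum_single_index]

theorem degSum_mono {a b : σ →₀ ℕ} (h : a ≤ b) : degSum a ≤ degSum b := by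
  obtain ⟨c, rfl⟩ := le_iff_exists_add.mp h
  rw [degSum_add]; omega

/-- L0 -/
theorem coeff_pow_eq_zero {a : MvPowerSeries σ R} (ha : MvPowerSeries.constantCoeff a = 0)
    {k : ℕ} {d : σ →₀ ℕ} (h : degSum d < k) : MvPowerSeries.coeff d (a ^ k) = 0 := by
  classical
  induction k generalizing d with
  | zero => exact absurd h (Nat.not_lt_zero _)
  | succ k ih =>
    rw [pow_succ', MvPowerSeries.coeff_mul]
    refine Finset.sum_eq_zero fun q hq => ?_
    rw [Finset.HasAntidiagonal.mem_antidiagonal] at hq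
    rcases eq_or_ne q.1 0 with h1 | h1
    · rw [h1, MvPowerSeries.coeff_zero_eq_constantCoeff_apply, ha, zero_mul]
    · have h1' : 1 ≤ degSum q.1 := by
        rcases Nat.eq_zero_or_pos (degSum q.1) with h0 | h0
        · exact absurd (degSum_eq_zero_iff.mp h0) h1
        · omega
      have : degSum q.1 + degSum q.2 = degSum d := by rw [← degSum_add, hq]
      rw [ih (by omega), mul_zero]

/-- L0' -/
theorem coeff_mul_pow_eq_zero {a b : MvPowerSeries σ R}
    (ha : MvPowerSeries.constantCoeff a = 0) (hb : MvPowerSeries.constantCoeff b = 0)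
    {k l : ℕ} {d : σ →₀ ℕ} (h : degSum d < k + l) :
    MvPowerSeries.coeff d (a ^ k * b ^ l) = 0 := by
  classical
  rw [MvPowerSeries.coeff_mul]
  refine Finset.sum_eq_zero fun q hq => ?_
  rw [Finset.HasAntidiagonal.mem_antidiagonal] at hq
  have : degSum q.1 + degSum q.2 = degSum d := by rw [← degSum_add, hq]
  rcases lt_or_ge (degSum q.1) k with h1 | h1
  · rw [coeff_pow_eq_zero ha h1, zero_mul]
  · rw [coeff_pow_eq_zero hb (by omega), mul_zero]

theorem subst1_coeff_raw (φ : PowerSeries R) (s : MvPowerSeries σ R) (d : σ →₀ ℕ) :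
    MvPowerSeries.coeff d (subst1 φ s) =
      ∑ k ∈ range (degSum d + 1), PowerSeries.coeff k φ * MvPowerSeries.coeff d (s ^ k) := by
  classical
  have h0 : MvPowerSeries.coeff d (subst1 φ s) = MvPowerSeries.coeff d
      (∑ k ∈ range (degSum d + 1), MvPowerSeries.C (σ := σ) (R := R) (PowerSeries.coeff k φ) * s ^ k) := rfl
  rw [h0, map_sum]
  exact Finset.sum_congr rfl fun k _ => MvPowerSeries.coeff_C_mul _ _ _

theorem subst1_coeff {φ : PowerSeries R} {s : MvPowerSeries σ R}
    (hs : MvPowerSeries.constantCoeff s = 0) {d : σ →₀ ℕ} {N : ℕ} (hN : degSum d ≤ N) :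
    MvPowerSeries.coeff d (subst1 φ s) =
      ∑ k ∈ range (N + 1), PowerSeries.coeff k φ * MvPowerSeries.coeff d (s ^ k) := by
  rw [subst1_coeff_raw]
  refine Finset.sum_subset (by intro x hx; simp only [mem_range] at *; omega) ?_
  intro k hk hk'
  simp only [mem_range] at hk hk'
  rw [coeff_pow_eq_zero hs (by omega), mul_zero]

theorem subst2_coeff_raw (F : MvPowerSeries (Fin 2) R) (a b : MvPowerSeries σ R) (d : σ →₀ ℕ) :
    MvPowerSeries.coeff d (subst2 F a b) =
      ∑ q ∈ range (degSum d + 1) ×ˢ range (degSum d + 1),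
        MvPowerSeries.coeff (Finsupp.single 0 q.1 + Finsupp.single 1 q.2) F *
          MvPowerSeries.coeff d (a ^ q.1 * b ^ q.2) := by
  classical
  have h0 : MvPowerSeries.coeff d (subst2 F a b) = MvPowerSeries.coeff d
      (∑ q ∈ range (degSum d + 1) ×ˢ range (degSum d + 1),
        MvPowerSeries.C (σ := σ) (R := R)
            (MvPowerSeries.coeff (Finsupp.single 0 q.1 + Finsupp.single 1 q.2) F) *
          (a ^ q.1 * b ^ q.2)) := rfl
  rw [h0, map_sum]
  exact Finset.sum_congr rfl fun k _ => MvPowerSeries.coeff_C_mul _ _ _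

theorem subst2_coeff {F : MvPowerSeries (Fin 2) R} {a b : MvPowerSeries σ R}
    (ha : MvPowerSeries.constantCoeff a = 0) (hb : MvPowerSeries.constantCoeff b = 0)
    {d : σ →₀ ℕ} {N : ℕ} (hN : degSum d ≤ N) :
    MvPowerSeries.coeff d (subst2 F a b) =
      ∑ q ∈ range (N + 1) ×ˢ range (N + 1),
        MvPowerSeries.coeff (Finsupp.single 0 q.1 + Finsupp.single 1 q.2) F *
          MvPowerSeries.coeff d (a ^ q.1 * b ^ q.2) := by
  rw [subst2_coeff_raw]
  refine Finset.sum_subset ?_ ?_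
  · intro x hx
    simp only [mem_product, mem_range] at *
    omega
  · intro q hq hq'
    simp only [mem_product, mem_range] at hq hq'
    have : degSum d < q.1 + q.2 := by omega
    rw [coeff_mul_pow_eq_zero ha hb this, mul_zero]

theorem constantCoeff_subst1 (φ : PowerSeries R) (s : MvPowerSeries σ R)
    :
    MvPowerSeries.constantCoeff (subst1 φ s) = PowerSeries.constantCoeff φ := by
  rw [← MvPowerSeries.coeff_zero_eq_constantCoeff_apply, subst1_coeff_raw]
  simp [degSum_zero]

end FGL

namespace FGL
open MvPowerSeries Finset
open scoped Classical

variable {R : Type} [CommRing R] {σ : Type} {p : ℕ}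

/-- The operator `A(X) ↦ A(X^p)` (all variables raised to the p-th power). -/
def wop (p : ℕ) (A : MvPowerSeries σ R) : MvPowerSeries σ R :=
  fun d => if p • d.mapRange (· / p) (by simp) = d then A (d.mapRange (· / p) (by simp)) else 0

theorem mapRange_smul_div (hp : 0 < p) (e : σ →₀ ℕ) :
    (p • e).mapRange (· / p) (by simp) = e := by
  ext i
  rw [Finsupp.mapRange_apply, Finsupp.smul_apply, smul_eq_mul, Nat.mul_div_cancel_left _ hp]

theorem coeff_wop_smul (hp : 0 < p) (A : MvPowerSeries σ R) (e : σ →₀ ℕ) :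
    MvPowerSeries.coeff (p • e) (wop p A) = MvPowerSeries.coeff e A := by
  rw [MvPowerSeries.coeff_apply, MvPowerSeries.coeff_apply]
  show (if p • (p • e).mapRange (· / p) (by simp) = p • e then A ((p • e).mapRange (· / p) (by simp)) else 0) = _
  rw [if_pos (by rw [mapRange_smul_div hp]), mapRange_smul_div hp]

theorem coeff_wop_of_ne (A : MvPowerSeries σ R) {d : σ →₀ ℕ}
    (h : ∀ e : σ →₀ ℕ, d ≠ p • e) : MvPowerSeries.coeff d (wop p A) = 0 := by
  rw [MvPowerSeries.coeff_apply]
  show (if p • d.mapRange (· / p) (by simp) = d then A (d.mapRange (· / p) (by simp)) else 0) = 0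
  rw [if_neg]
  intro hc
  exact h _ hc.symm

theorem wop_injective (hp : 0 < p) : Function.Injective (wop p : MvPowerSeries σ R → _) := by
  intro A B h
  ext e
  rw [← coeff_wop_smul hp A e, ← coeff_wop_smul hp B e, h]

theorem wop_eq_form {d : σ →₀ ℕ} (h : ¬ ∀ e : σ →₀ ℕ, d ≠ p • e) : ∃ e, d = p • e := by
  push_neg at h; exact h

theorem smul_eq_zero_iff' (hp : 0 < p) {e : σ →₀ ℕ} : p • e = 0 ↔ e = 0 := by
  constructor
  · intro h
    ext i
    have := DFunLike.congr_fun h i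
    simp only [Finsupp.smul_apply, smul_eq_mul, Finsupp.coe_zero, Pi.zero_apply] at this ⊢
    rcases Nat.mul_eq_zero.mp this with h | h
    · omega
    · exact h
  · rintro rfl; simp

theorem smul_le_smul_iff' (hp : 0 < p) {e1 e : σ →₀ ℕ} (h : p • e1 ≤ p • e) : e1 ≤ e := by
  rw [Finsupp.le_def] at h ⊢
  intro i
  have := h i
  simp only [Finsupp.smul_apply, smul_eq_mul] at this
  exact Nat.le_of_mul_le_mul_left this hp

theorem wop_add (hp : 0 < p) (A B : MvPowerSeries σ R) :
    wop p (A + B) = wop p A + wop p B := by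
  ext d
  by_cases h : ∀ e : σ →₀ ℕ, d ≠ p • e
  · rw [map_add, coeff_wop_of_ne _ h, coeff_wop_of_ne _ h, coeff_wop_of_ne _ h, add_zero]
  · obtain ⟨e, rfl⟩ := wop_eq_form h
    rw [map_add, coeff_wop_smul hp, coeff_wop_smul hp, coeff_wop_smul hp, map_add]

theorem wop_one (hp : 0 < p) : wop p (1 : MvPowerSeries σ R) = 1 := by
  classical
  ext d
  by_cases h : ∀ e : σ →₀ ℕ, d ≠ p • e
  · rw [coeff_wop_of_ne _ h, MvPowerSeries.coeff_one, if_neg (h 0 ∘ (by simp [·]))]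
  · obtain ⟨e, rfl⟩ := wop_eq_form h
    rw [coeff_wop_smul hp, MvPowerSeries.coeff_one, MvPowerSeries.coeff_one]
    by_cases he : e = 0
    · rw [if_pos he, if_pos (by rw [he, smul_zero])]
    · rw [if_neg he, if_neg (fun hc => he ((smul_eq_zero_iff' hp).mp hc))]

theorem wop_zero (hp : 0 < p) : wop p (0 : MvPowerSeries σ R) = 0 := by
  ext d
  by_cases h : ∀ e : σ →₀ ℕ, d ≠ p • e
  · rw [coeff_wop_of_ne _ h, map_zero]
  · obtain ⟨e, rfl⟩ := wop_eq_form h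
    rw [coeff_wop_smul hp, map_zero, map_zero]

theorem wop_mul (hp : 0 < p) (A B : MvPowerSeries σ R) :
    wop p (A * B) = wop p A * wop p B := by
  classical
  ext d
  by_cases h : ∀ e : σ →₀ ℕ, d ≠ p • e
  · rw [coeff_wop_of_ne _ h, MvPowerSeries.coeff_mul]
    refine (Finset.sum_eq_zero fun q hq => ?_).symm
    rw [Finset.HasAntidiagonal.mem_antidiagonal] at hq
    by_cases h1 : ∀ e : σ →₀ ℕ, q.1 ≠ p • e
    · rw [coeff_wop_of_ne _ h1, zero_mul]
    · obtain ⟨e1, he1⟩ := wop_eq_form h1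
      by_cases h2 : ∀ e : σ →₀ ℕ, q.2 ≠ p • e
      · rw [coeff_wop_of_ne _ h2, mul_zero]
      · obtain ⟨e2, he2⟩ := wop_eq_form h2
        exact absurd (by rw [← hq, he1, he2, ← smul_add]) (h (e1 + e2))
  · obtain ⟨e, rfl⟩ := wop_eq_form h
    rw [coeff_wop_smul hp, MvPowerSeries.coeff_mul, MvPowerSeries.coeff_mul]
    have hinj : ∀ x ∈ antidiagonal e, ∀ y ∈ antidiagonal e,
        (fun q : (σ →₀ ℕ) × (σ →₀ ℕ) => (p • q.1, p • q.2)) x =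
          (fun q : (σ →₀ ℕ) × (σ →₀ ℕ) => (p • q.1, p • q.2)) y → x = y := by
      intro x _ y _ hxy
      obtain ⟨h1, h2⟩ := Prod.ext_iff.mp hxy
      simp only at h1 h2
      exact Prod.ext
        (le_antisymm (smul_le_smul_iff' hp h1.le) (smul_le_smul_iff' hp h1.ge))
        (le_antisymm (smul_le_smul_iff' hp h2.le) (smul_le_smul_iff' hp h2.ge))
    have himg := Finset.sum_image (s := antidiagonal e)
      (g := fun q : (σ →₀ ℕ) × (σ →₀ ℕ) => (p • q.1, p • q.2))
      (f := fun r : (σ →₀ ℕ) × (σ →₀ ℕ) =>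
        MvPowerSeries.coeff r.1 (wop p A) * MvPowerSeries.coeff r.2 (wop p B)) hinj
    have hsub : (antidiagonal e).image (fun q : (σ →₀ ℕ) × (σ →₀ ℕ) => (p • q.1, p • q.2)) ⊆
        antidiagonal (p • e) := by
      intro x hx
      simp only [Finset.mem_image, Finset.HasAntidiagonal.mem_antidiagonal] at hx ⊢
      obtain ⟨q, hq, rfl⟩ := hx
      rw [← smul_add, hq]
    rw [← Finset.sum_subset hsub ?vanish]
    · rw [himg]
      exact Finset.sum_congr rfl fun q _ => by
        simp only
        rw [coeff_wop_smul hp, coeff_wop_smul hp]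
    case vanish =>
      intro r hr hr'
      rw [Finset.HasAntidiagonal.mem_antidiagonal] at hr
      by_cases h1 : ∀ e : σ →₀ ℕ, r.1 ≠ p • e
      · rw [coeff_wop_of_ne _ h1, zero_mul]
      · obtain ⟨e1, he1⟩ := wop_eq_form h1
        exfalso
        apply hr'
        simp only [Finset.mem_image, Finset.HasAntidiagonal.mem_antidiagonal]
        have hle : e1 ≤ e := smul_le_smul_iff' hp
          (by rw [← he1]; exact hr ▸ le_add_right le_rfl)
        refine ⟨(e1, e - e1), by simp [hle], ?_⟩
        have h2 : r.2 = p • (e - e1) := by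
          have h3 : r.2 = p • e - p • e1 := by
            rw [← hr, he1]; exact (add_tsub_cancel_left _ _).symm
          rw [h3]
          ext i
          simp only [Finsupp.tsub_apply, Finsupp.smul_apply, smul_eq_mul]
          exact (Nat.mul_sub _ _ _).symm
        simp only
        rw [← he1, ← h2]

end FGL

namespace FGL
open MvPowerSeries Finset

variable {R : Type} [CommRing R] {σ : Type} {p : ℕ}

theorem add_pow_char' {T : Type*} [CommRing T] (hp : p.Prime) (hT : (p : T) = 0) (a b : T) :
    (a + b) ^ p = a ^ p + b ^ p := by
  rw [add_pow_prime_eq hp, hT, zero_mul, zero_mul, zero_mul, add_zero]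

theorem sum_pow_char' {T : Type*} [CommRing T] (hp : p.Prime) (hT : (p : T) = 0)
    {ι : Type*} (s : Finset ι) (f : ι → T) :
    (∑ x ∈ s, f x) ^ p = ∑ x ∈ s, f x ^ p := by
  classical
  induction s using Finset.induction with
  | empty => simp [zero_pow hp.ne_zero]
  | insert _ _ hx ih =>
    rw [Finset.sum_insert hx, Finset.sum_insert hx, add_pow_char' hp hT, ih]

theorem natCast_mv_eq_zero (hpR : (p : R) = 0) : ((p : ℕ) : MvPowerSeries σ R) = 0 := by
  rw [← map_natCast (MvPowerSeries.C (σ := σ) (R := R)) p, hpR, map_zero]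

/-- Frobenius ring endomorphism of a ring with `p · 1 = 0`. -/
def frobHom (hp : p.Prime) (hpR : (p : R) = 0) : R →+* R where
  toFun := (· ^ p)
  map_one' := one_pow p
  map_mul' := fun a b => mul_pow a b p
  map_zero' := zero_pow hp.ne_zero
  map_add' := fun a b => add_pow_char' hp hpR a b

theorem smul_injective' (hp : 0 < p) {e1 e2 : σ →₀ ℕ} (h : p • e1 = p • e2) : e1 = e2 :=
  le_antisymm (smul_le_smul_iff' hp h.le) (smul_le_smul_iff' hp h.ge)

theorem wop_monomial (hp : 0 < p) (e : σ →₀ ℕ) (a : R) :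
    wop p (MvPowerSeries.monomial e a) = MvPowerSeries.monomial (p • e) a := by
  classical
  ext d
  by_cases h : ∀ e' : σ →₀ ℕ, d ≠ p • e'
  · rw [coeff_wop_of_ne _ h, MvPowerSeries.coeff_monomial, if_neg (h e ∘ (by simp [·]))]
  · obtain ⟨e', rfl⟩ := wop_eq_form h
    rw [coeff_wop_smul hp, MvPowerSeries.coeff_monomial, MvPowerSeries.coeff_monomial]
    by_cases he : e' = e
    · rw [if_pos he, if_pos (by rw [he])]
    · rw [if_neg he, if_neg (fun hc => he (smul_injective' hp hc))]

theorem monomial_pow' (e : σ →₀ ℕ) (a : R) (k : ℕ) :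
    (MvPowerSeries.monomial e a) ^ k = MvPowerSeries.monomial (k • e) (a ^ k) := by
  induction k with
  | zero => simp only [pow_zero, zero_smul]; exact MvPowerSeries.monomial_zero_one.symm
  | succ k ih =>
    rw [pow_succ, ih, MvPowerSeries.monomial_mul_monomial, succ_nsmul, pow_succ]

theorem wop_sum (hp : 0 < p) {ι : Type*} (s : Finset ι) (f : ι → MvPowerSeries σ R) :
    wop p (∑ x ∈ s, f x) = ∑ x ∈ s, wop p (f x) := by
  classical
  induction s using Finset.induction with
  | empty => simpa using wop_zero hp
  | insert _ _ hx ih => rw [Finset.sum_insert hx, Finset.sum_insert hx, wop_add hp, ih]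

theorem map_monomial' (f : R →+* R) (e : σ →₀ ℕ) (a : R) :
    MvPowerSeries.map f (MvPowerSeries.monomial e a) = MvPowerSeries.monomial e (f a) := by
  classical
  ext d
  rw [MvPowerSeries.coeff_map, MvPowerSeries.coeff_monomial, MvPowerSeries.coeff_monomial]
  split <;> simp

/-- Frobenius on power series: `A^p = (map frob A)(X^p)`. -/
theorem pow_p_eq_wop (hp : p.Prime) (hpR : (p : R) = 0) (A : MvPowerSeries σ R) :
    A ^ p = wop p (MvPowerSeries.map (frobHom hp hpR) A) := by
  classical
  have hS : ((p : ℕ) : MvPowerSeries σ R) = 0 := natCast_mv_eq_zero hpR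
  have hp0 : 0 < p := hp.pos
  ext d
  set P : MvPowerSeries σ R :=
    ∑ e ∈ Finset.Iic d, MvPowerSeries.monomial e (MvPowerSeries.coeff e A) with hP
  set B : MvPowerSeries σ R := A - P with hBdef
  have hcoeffP : ∀ e : σ →₀ ℕ,
      MvPowerSeries.coeff e P = if e ∈ Finset.Iic d then MvPowerSeries.coeff e A else 0 := by
    intro e
    rw [hP, map_sum]
    rw [Finset.sum_congr rfl fun e' _ => MvPowerSeries.coeff_monomial e e' _]
    exact Finset.sum_ite_eq _ _ _
  have hB : ∀ e ≤ d, MvPowerSeries.coeff e B = 0 := by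
    intro e he
    rw [hBdef, map_sub, hcoeffP, if_pos (Finset.mem_Iic.mpr he), sub_self]
  have hA : A = P + B := by rw [hBdef]; ring
  have hBp : MvPowerSeries.coeff d (B ^ p) = 0 := by
    obtain ⟨q, hq⟩ : ∃ q, p = q + 1 := ⟨p - 1, by omega⟩
    rw [hq, pow_succ', MvPowerSeries.coeff_mul]
    refine Finset.sum_eq_zero fun x hx => ?_
    rw [Finset.HasAntidiagonal.mem_antidiagonal] at hx
    rw [hB x.1 (by rw [← hx]; exact le_add_right le_rfl), zero_mul]
  have hwBp : MvPowerSeries.coeff d (wop p (MvPowerSeries.map (frobHom hp hpR) B)) = 0 := by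
    by_cases h : ∀ e' : σ →₀ ℕ, d ≠ p • e'
    · rw [coeff_wop_of_ne _ h]
    · obtain ⟨e, rfl⟩ := wop_eq_form h
      rw [coeff_wop_smul hp0, MvPowerSeries.coeff_map]
      have he : e ≤ p • e := by
        rw [Finsupp.le_def]
        intro i
        rw [Finsupp.smul_apply, smul_eq_mul]
        exact Nat.le_mul_of_pos_left _ hp0
      rw [hB e he]
      exact zero_pow hp.ne_zero
  have hPp : P ^ p = wop p (MvPowerSeries.map (frobHom hp hpR) P) := by
    rw [hP, sum_pow_char' hp hS, map_sum, wop_sum hp0]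
    refine Finset.sum_congr rfl fun e _ => ?_
    rw [monomial_pow', map_monomial' (frobHom hp hpR), wop_monomial hp0]
    rfl
  calc MvPowerSeries.coeff d (A ^ p)
      = MvPowerSeries.coeff d (P ^ p + B ^ p) := by
        rw [hA, add_pow_char' hp hS]
    _ = MvPowerSeries.coeff d (P ^ p) := by rw [map_add, hBp, add_zero]
    _ = MvPowerSeries.coeff d (wop p (MvPowerSeries.map (frobHom hp hpR) A)) := by
        rw [hPp]
        conv_rhs => rw [hA]
        rw [map_add, wop_add hp0, map_add, hwBp, add_zero]

theorem map_subst2 (f : R →+* R) (F : MvPowerSeries (Fin 2) R) (a b : MvPowerSeries σ R) :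
    subst2 (MvPowerSeries.map f F) (MvPowerSeries.map f a) (MvPowerSeries.map f b) =
      MvPowerSeries.map f (subst2 F a b) := by
  ext d
  rw [MvPowerSeries.coeff_map, subst2_coeff_raw, subst2_coeff_raw, map_sum]
  refine Finset.sum_congr rfl fun q _ => ?_
  have hmb : (MvPowerSeries.map f a) ^ q.1 * (MvPowerSeries.map f b) ^ q.2 =
      MvPowerSeries.map f (a ^ q.1 * b ^ q.2) := by
    rw [map_mul, map_pow, map_pow]
  rw [hmb, MvPowerSeries.coeff_map]
  exact (map_mul f _ _).symm

theorem map_subst1 (f : R →+* R) (φ : PowerSeries R) (s : MvPowerSeries σ R) :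
    subst1 (PowerSeries.map f φ) (MvPowerSeries.map f s) =
      MvPowerSeries.map f (subst1 φ s) := by
  ext d
  rw [MvPowerSeries.coeff_map, subst1_coeff_raw, subst1_coeff_raw, map_sum]
  refine Finset.sum_congr rfl fun k _ => ?_
  have hmb : (MvPowerSeries.map f s) ^ k = MvPowerSeries.map f (s ^ k) := by rw [map_pow]
  rw [hmb, MvPowerSeries.coeff_map, PowerSeries.coeff_map]
  exact (map_mul f _ _).symm

end FGL

namespace FGL
open MvPowerSeries Finset

variable {R : Type} [CommRing R]

/-- The exponent `(a, b)` as a `Fin 2 →₀ ℕ`. -/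
def DD (a b : ℕ) : Fin 2 →₀ ℕ := Finsupp.single 0 a + Finsupp.single 1 b

theorem DD_apply0 (a b : ℕ) : DD a b 0 = a := by
  simp [DD, Finsupp.single_apply]

theorem DD_apply1 (a b : ℕ) : DD a b 1 = b := by
  simp [DD, Finsupp.single_apply]

theorem DD_eq_self (d : Fin 2 →₀ ℕ) : DD (d 0) (d 1) = d := by
  ext i
  fin_cases i
  · rw [show ((⟨0, by omega⟩ : Fin 2)) = 0 from rfl, DD_apply0]
  · rw [show ((⟨1, by omega⟩ : Fin 2)) = 1 from rfl, DD_apply1]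

theorem DD_add (a b c d : ℕ) : DD a b + DD c d = DD (a + c) (b + d) := by
  simp only [DD, Finsupp.single_add]
  abel

theorem degSum_DD (a b : ℕ) : degSum (DD a b) = a + b := by
  rw [DD, degSum_add, degSum_single, degSum_single]

theorem DD_zero : DD 0 0 = 0 := by
  simp [DD]

theorem DD_eq_iff {a b c d : ℕ} : DD a b = DD c d ↔ a = c ∧ b = d := by
  constructor
  · intro h
    constructor
    · rw [← DD_apply0 a b, h, DD_apply0]
    · rw [← DD_apply1 a b, h, DD_apply1]
  · rintro ⟨rfl, rfl⟩; rfl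

theorem coeff_mul_DD (A B : MvPowerSeries (Fin 2) R) (m n : ℕ) :
    MvPowerSeries.coeff (DD m n) (A * B) =
      ∑ x ∈ range (m + 1) ×ˢ range (n + 1),
        MvPowerSeries.coeff (DD x.1 x.2) A *
          MvPowerSeries.coeff (DD (m - x.1) (n - x.2)) B := by
  classical
  rw [MvPowerSeries.coeff_mul]
  refine Finset.sum_nbij' (fun q => (q.1 0, q.1 1))
    (fun x => (DD x.1 x.2, DD (m - x.1) (n - x.2))) ?_ ?_ ?_ ?_ ?_
  · intro q hq
    rw [Finset.HasAntidiagonal.mem_antidiagonal] at hq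
    have h0 : q.1 0 + q.2 0 = m := by
      rw [← DD_apply0 m n, ← hq]; simp
    have h1 : q.1 1 + q.2 1 = n := by
      rw [← DD_apply1 m n, ← hq]; simp
    simp only [Finset.mem_product, Finset.mem_range]
    omega
  · intro x hx
    simp only [Finset.mem_product, Finset.mem_range] at hx
    rw [Finset.HasAntidiagonal.mem_antidiagonal, DD_add]
    congr 1 <;> omega
  · intro q hq
    rw [Finset.HasAntidiagonal.mem_antidiagonal] at hq
    have h0 : q.1 0 + q.2 0 = m := by
      rw [← DD_apply0 m n, ← hq]; simp
    have h1 : q.1 1 + q.2 1 = n := by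
      rw [← DD_apply1 m n, ← hq]; simp
    have e1 : DD (q.1 0) (q.1 1) = q.1 := DD_eq_self q.1
    have e2 : DD (m - q.1 0) (n - q.1 1) = q.2 := by
      rw [show m - q.1 0 = q.2 0 by omega, show n - q.1 1 = q.2 1 by omega]
      exact DD_eq_self q.2
    exact Prod.ext e1 e2
  · intro x hx
    simp only [DD_apply0, DD_apply1]
  · intro q hq
    rw [Finset.HasAntidiagonal.mem_antidiagonal] at hq
    have h0 : q.1 0 + q.2 0 = m := by
      rw [← DD_apply0 m n, ← hq]; simp
    have h1 : q.1 1 + q.2 1 = n := by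
      rw [← DD_apply1 m n, ← hq]; simp
    have e2 : DD (m - q.1 0) (n - q.1 1) = q.2 := by
      rw [show m - q.1 0 = q.2 0 by omega, show n - q.1 1 = q.2 1 by omega]
      exact DD_eq_self q.2
    simp only
    rw [e2, DD_eq_self q.1]

theorem zero_pow_series (k : ℕ) :
    ((0 : MvPowerSeries Unit R) ^ k) = if k = 0 then 1 else 0 := by
  cases k with
  | zero => simp
  | succ k => simp [zero_pow]

/-- From `F(X, 0) = X`. -/
theorem coeff_F_X0 {F : MvPowerSeries (Fin 2) R} (hF : IsFGL F) (a : ℕ) :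
    MvPowerSeries.coeff (DD a 0) F = if a = 1 then 1 else 0 := by
  classical
  have h := congrArg (MvPowerSeries.coeff (Finsupp.single () a)) hF.substXzero
  rw [subst2_coeff_raw, degSum_single] at h
  rw [show (PowerSeries.X : MvPowerSeries Unit R) = MvPowerSeries.X () from rfl,
    MvPowerSeries.coeff_X] at h
  have hsum : ∑ q ∈ range (a + 1) ×ˢ range (a + 1),
      MvPowerSeries.coeff (Finsupp.single 0 q.1 + Finsupp.single 1 q.2) F *
        MvPowerSeries.coeff (Finsupp.single () a)
          ((MvPowerSeries.X () : MvPowerSeries Unit R) ^ q.1 * (0 : MvPowerSeries Unit R) ^ q.2) =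
      MvPowerSeries.coeff (DD a 0) F := by
    rw [Finset.sum_eq_single (a, 0)]
    · rw [pow_zero, mul_one, MvPowerSeries.X_pow_eq, MvPowerSeries.coeff_monomial,
        if_pos rfl, mul_one]
      rfl
    · intro q hq hqa
      rcases Nat.eq_zero_or_pos q.2 with h2 | h2
      · have h1 : q.1 ≠ a := fun hc => hqa (Prod.ext hc h2)
        rw [h2, pow_zero, mul_one, MvPowerSeries.X_pow_eq, MvPowerSeries.coeff_monomial,
          if_neg (fun hc => h1 (Finsupp.single_injective () hc).symm), mul_zero]
      · rw [zero_pow (by omega : q.2 ≠ 0), mul_zero, map_zero, mul_zero]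
    · intro h
      exact absurd (by simp : (a, 0) ∈ range (a + 1) ×ˢ range (a + 1)) h
  rw [hsum] at h
  rw [h]
  by_cases ha : a = 1
  · rw [if_pos ha, if_pos (by rw [ha])]
  · rw [if_neg ha, if_neg (fun hc => ha ((Finsupp.single_injective ()) hc))]

/-- From `F(0, Y) = Y`. -/
theorem coeff_F_X1 {F : MvPowerSeries (Fin 2) R} (hF : IsFGL F) (b : ℕ) :
    MvPowerSeries.coeff (DD 0 b) F = if b = 1 then 1 else 0 := by
  classical
  have h := congrArg (MvPowerSeries.coeff (Finsupp.single () b)) hF.substZeroX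
  rw [subst2_coeff_raw, degSum_single] at h
  rw [show (PowerSeries.X : MvPowerSeries Unit R) = MvPowerSeries.X () from rfl,
    MvPowerSeries.coeff_X] at h
  have hsum : ∑ q ∈ range (b + 1) ×ˢ range (b + 1),
      MvPowerSeries.coeff (Finsupp.single 0 q.1 + Finsupp.single 1 q.2) F *
        MvPowerSeries.coeff (Finsupp.single () b)
          ((0 : MvPowerSeries Unit R) ^ q.1 * (MvPowerSeries.X () : MvPowerSeries Unit R) ^ q.2) =
      MvPowerSeries.coeff (DD 0 b) F := by
    rw [Finset.sum_eq_single (0, b)]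
    · rw [pow_zero, one_mul, MvPowerSeries.X_pow_eq, MvPowerSeries.coeff_monomial,
        if_pos rfl, mul_one]
      rfl
    · intro q hq hqa
      rcases Nat.eq_zero_or_pos q.1 with h2 | h2
      · have h1 : q.2 ≠ b := fun hc => hqa (Prod.ext h2 hc)
        rw [h2, pow_zero, one_mul, MvPowerSeries.X_pow_eq, MvPowerSeries.coeff_monomial,
          if_neg (fun hc => h1 (Finsupp.single_injective () hc).symm), mul_zero]
      · rw [zero_pow (by omega : q.1 ≠ 0), zero_mul, map_zero, mul_zero]
    · intro h
      exact absurd (by simp : ((0 : ℕ), b) ∈ range (b + 1) ×ˢ range (b + 1)) h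
  rw [hsum] at h
  rw [h]
  by_cases hb : b = 1
  · rw [if_pos hb, if_pos (by rw [hb])]
  · rw [if_neg hb, if_neg (fun hc => hb ((Finsupp.single_injective ()) hc))]

theorem constantCoeff_F {F : MvPowerSeries (Fin 2) R} (hF : IsFGL F) :
    MvPowerSeries.constantCoeff F = 0 := by
  have := coeff_F_X0 hF 0
  rw [DD_zero, if_neg (by omega), MvPowerSeries.coeff_zero_eq_constantCoeff_apply] at this
  exact this

theorem Fk0 {F : MvPowerSeries (Fin 2) R} (hF : IsFGL F) (k m : ℕ) :
    MvPowerSeries.coeff (DD m 0) (F ^ k) = if m = k then 1 else 0 := by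
  classical
  induction k generalizing m with
  | zero =>
    rw [pow_zero, MvPowerSeries.coeff_one]
    by_cases hm : m = 0
    · rw [if_pos (by rw [hm, DD_zero]), if_pos hm]
    · rw [if_neg (fun hc => hm (by rw [← DD_apply0 m 0, hc]; simp)), if_neg hm]
  | succ k ih =>
    rw [pow_succ', coeff_mul_DD]
    have hterm : ∀ x ∈ range (m + 1) ×ˢ range (0 + 1),
        MvPowerSeries.coeff (DD x.1 x.2) F *
          MvPowerSeries.coeff (DD (m - x.1) (0 - x.2)) (F ^ k) =
        if x = (1, 0) then (if m - 1 = k then (1 : R) else 0) else 0 := by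
      intro x hx
      simp only [Finset.mem_product, Finset.mem_range] at hx
      have hx2 : x.2 = 0 := by omega
      rw [hx2, coeff_F_X0 hF, ih]
      by_cases hx1 : x.1 = 1
      · simp [Prod.ext_iff, hx1, hx2]
      · simp [Prod.ext_iff, hx1, hx2]
    rw [Finset.sum_congr rfl hterm, Finset.sum_ite_eq' (range (m + 1) ×ˢ range (0 + 1)) (1, 0)
      (fun _ => if m - 1 = k then (1 : R) else 0)]
    by_cases hm : m = k + 1
    · rw [if_pos (by simp only [Finset.mem_product, Finset.mem_range]; omega),
        if_pos (by omega), if_pos hm]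
    · by_cases hm1 : (1, 0) ∈ range (m + 1) ×ˢ range (0 + 1)
      · simp only [Finset.mem_product, Finset.mem_range] at hm1
        rw [if_pos (by simp only [Finset.mem_product, Finset.mem_range]; omega),
          if_neg (by omega), if_neg hm]
      · rw [if_neg hm1, if_neg hm]

theorem Fk1 {F : MvPowerSeries (Fin 2) R} (hF : IsFGL F) (k m : ℕ) (hk : k ≤ m + 1) :
    MvPowerSeries.coeff (DD m 1) (F ^ k) =
      (k : R) * MvPowerSeries.coeff (DD (m + 1 - k) 1) F := by
  classical
  induction k generalizing m with
  | zero =>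
    rw [pow_zero, MvPowerSeries.coeff_one, Nat.cast_zero, zero_mul,
      if_neg (fun hc => by have h := DD_apply1 m 1; rw [hc] at h; simp at h)]
  | succ k ih =>
    rw [pow_succ', coeff_mul_DD]
    rw [Finset.sum_product]
    have hsplit : ∀ a : ℕ, ∑ b ∈ range (1 + 1),
        MvPowerSeries.coeff (DD a b) F *
          MvPowerSeries.coeff (DD (m - a) (1 - b)) (F ^ k) =
        MvPowerSeries.coeff (DD a 0) F * MvPowerSeries.coeff (DD (m - a) 1) (F ^ k) +
        MvPowerSeries.coeff (DD a 1) F * MvPowerSeries.coeff (DD (m - a) 0) (F ^ k) := by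
      intro a
      rw [Finset.sum_range_succ, Finset.sum_range_one]
    rw [Finset.sum_congr rfl fun a _ => hsplit a, Finset.sum_add_distrib]
    have hS0 : ∑ a ∈ range (m + 1),
        MvPowerSeries.coeff (DD a 0) F * MvPowerSeries.coeff (DD (m - a) 1) (F ^ k) =
        if 1 ∈ range (m + 1) then MvPowerSeries.coeff (DD (m - 1) 1) (F ^ k) else 0 := by
      have h1 : ∀ a ∈ range (m + 1),
          MvPowerSeries.coeff (DD a 0) F * MvPowerSeries.coeff (DD (m - a) 1) (F ^ k) =
          if a = 1 then MvPowerSeries.coeff (DD (m - a) 1) (F ^ k) else 0 := by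
        intro a _
        rw [coeff_F_X0 hF, ite_mul, one_mul, zero_mul]
      rw [Finset.sum_congr rfl h1]
      exact Finset.sum_ite_eq' _ _ _
    have hS1 : ∑ a ∈ range (m + 1),
        MvPowerSeries.coeff (DD a 1) F * MvPowerSeries.coeff (DD (m - a) 0) (F ^ k) =
        if m - k ∈ range (m + 1) ∧ k ≤ m then MvPowerSeries.coeff (DD (m - k) 1) F else 0 := by
      have hterm : ∀ a ∈ range (m + 1),
          MvPowerSeries.coeff (DD a 1) F * MvPowerSeries.coeff (DD (m - a) 0) (F ^ k) =
          if a = m - k ∧ k ≤ m then MvPowerSeries.coeff (DD a 1) F else 0 := by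
        intro a ha
        simp only [Finset.mem_range] at ha
        rw [Fk0 hF]
        by_cases hc : m - a = k
        · rw [if_pos hc, mul_one, if_pos (by omega)]
        · rw [if_neg hc, mul_zero, if_neg (by omega)]
      rw [Finset.sum_congr rfl hterm]
      by_cases hkm : k ≤ m
      · have h2 : ∀ a ∈ range (m + 1),
            (if a = m - k ∧ k ≤ m then MvPowerSeries.coeff (DD a 1) F else 0) =
            if a = m - k then MvPowerSeries.coeff (DD a 1) F else 0 := by
          intro a _
          by_cases h : a = m - k
          · simp [h, hkm]
          · simp [h]
        rw [Finset.sum_congr rfl h2, Finset.sum_ite_eq' _ _ _,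
          if_pos (by simp only [Finset.mem_range]; omega),
          if_pos ⟨by simp only [Finset.mem_range]; omega, hkm⟩]
      · rw [Finset.sum_congr rfl (fun a _ => by rw [if_neg (by omega)]), Finset.sum_const_zero,
          if_neg (by omega)]
    rw [hS0, hS1]
    rcases Nat.eq_zero_or_pos m with hm | hm
    · subst hm
      have hk0 : k = 0 := by omega
      subst hk0
      rw [if_neg (by simp), if_pos ⟨by simp, le_rfl⟩]
      simp
    · have hkm : k ≤ m := by omega
      rw [if_pos (by simp only [Finset.mem_range]; omega),
        if_pos ⟨by simp only [Finset.mem_range]; omega, hkm⟩,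
        ih (m - 1) (by omega)]
      rw [show m - 1 + 1 - k = m - k by omega, show m + 1 - (k + 1) = m - k by omega]
      push_cast
      ring

end FGL

namespace FGL
open MvPowerSeries Finset

variable {R : Type} [CommRing R] {σ : Type}

theorem coeff_subst1_X [DecidableEq σ] (φ : PowerSeries R) (i : σ) (d : σ →₀ ℕ) :
    MvPowerSeries.coeff d (subst1 φ (MvPowerSeries.X i)) =
      if d = Finsupp.single i (degSum d) then PowerSeries.coeff (degSum d) φ else 0 := by
  classical
  rw [subst1_coeff_raw]
  have hterm : ∀ k, MvPowerSeries.coeff d ((MvPowerSeries.X i : MvPowerSeries σ R) ^ k) =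
      if d = Finsupp.single i k then 1 else 0 := fun k => by
    rw [MvPowerSeries.X_pow_eq, MvPowerSeries.coeff_monomial]
  by_cases hd : d = Finsupp.single i (degSum d)
  · rw [Finset.sum_eq_single (degSum d)]
    · rw [hterm, if_pos hd, mul_one, if_pos hd]
    · intro k _ hk
      rw [hterm, if_neg, mul_zero]
      intro hc
      exact hk (by rw [hc, degSum_single])
    · intro hmem
      exact absurd (by simp : degSum d ∈ range (degSum d + 1)) hmem
  · rw [if_neg hd]
    refine Finset.sum_eq_zero fun k _ => ?_
    rw [hterm, if_neg, mul_zero]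
    intro hc
    exact hd (by rw [hc, degSum_single])

theorem pure_pow {A : MvPowerSeries (Fin 2) R} (i : Fin 2)
    (hA : ∀ d : Fin 2 →₀ ℕ, d i ≠ 0 → MvPowerSeries.coeff d A = 0) (k : ℕ) :
    ∀ d : Fin 2 →₀ ℕ, d i ≠ 0 → MvPowerSeries.coeff d (A ^ k) = 0 := by
  classical
  induction k with
  | zero =>
    intro d hd
    rw [pow_zero, MvPowerSeries.coeff_one, if_neg (fun hc => hd (by rw [hc]; simp))]
  | succ k ih =>
    intro d hd
    rw [pow_succ', MvPowerSeries.coeff_mul]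
    refine Finset.sum_eq_zero fun q hq => ?_
    rw [Finset.HasAntidiagonal.mem_antidiagonal] at hq
    have hsum : q.1 i + q.2 i = d i := by rw [← hq]; simp
    rcases Nat.eq_zero_or_pos (q.1 i) with h1 | h1
    · rw [ih q.2 (by omega), mul_zero]
    · rw [hA q.1 (by omega), zero_mul]

theorem pureX_subst1_X0 (φ : PowerSeries R) :
    ∀ d : Fin 2 →₀ ℕ, d 1 ≠ 0 →
      MvPowerSeries.coeff d (subst1 φ (MvPowerSeries.X (0 : Fin 2))) = 0 := by
  intro d hd
  rw [coeff_subst1_X, if_neg]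
  intro hc
  exact hd (by rw [hc, Finsupp.single_apply, if_neg (by omega)])

theorem pureY_subst1_X1 (φ : PowerSeries R) :
    ∀ d : Fin 2 →₀ ℕ, d 0 ≠ 0 →
      MvPowerSeries.coeff d (subst1 φ (MvPowerSeries.X (1 : Fin 2))) = 0 := by
  intro d hd
  rw [coeff_subst1_X, if_neg]
  intro hc
  exact hd (by rw [hc, Finsupp.single_apply, if_neg (by omega)])

theorem coeff_s1_pow_01 {φ : PowerSeries R} (h0 : PowerSeries.constantCoeff φ = 0)
    (h1 : PowerSeries.coeff 1 φ = 0) (l : ℕ) :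
    MvPowerSeries.coeff (DD 0 1) ((subst1 φ (MvPowerSeries.X (1 : Fin 2))) ^ l) = 0 := by
  classical
  match l with
  | 0 =>
    rw [pow_zero, MvPowerSeries.coeff_one,
      if_neg (fun hc => by have h := DD_apply1 0 1; rw [hc] at h; simp at h)]
  | 1 =>
    rw [pow_one, coeff_subst1_X, degSum_DD]
    rw [if_pos (by rw [DD, Finsupp.single_zero, zero_add]), h1]
  | (l + 2) =>
    refine coeff_pow_eq_zero ?_ (by rw [degSum_DD]; omega)
    rw [constantCoeff_subst1, h0]

/-- The coefficient of `X^m Y^1` of the right hand side of the homomorphism equation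
vanishes. -/
theorem coeff_rhs_vanish {G : MvPowerSeries (Fin 2) R} {φ : PowerSeries R}
    (h0 : PowerSeries.constantCoeff φ = 0) (h1 : PowerSeries.coeff 1 φ = 0) (m : ℕ) :
    MvPowerSeries.coeff (DD m 1)
      (subst2 G (subst1 φ (MvPowerSeries.X (0 : Fin 2)))
        (subst1 φ (MvPowerSeries.X (1 : Fin 2)))) = 0 := by
  classical
  rw [subst2_coeff_raw]
  refine Finset.sum_eq_zero fun q _ => ?_
  have hin : MvPowerSeries.coeff (DD m 1)
      ((subst1 φ (MvPowerSeries.X (0 : Fin 2))) ^ q.1 *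
        (subst1 φ (MvPowerSeries.X (1 : Fin 2))) ^ q.2) = 0 := by
    rw [coeff_mul_DD]
    refine Finset.sum_eq_zero fun x hx => ?_
    simp only [Finset.mem_product, Finset.mem_range] at hx
    rcases Nat.eq_zero_or_pos x.2 with h2 | h2
    · rcases Nat.lt_or_ge x.1 m with ha | ha
      · rw [pure_pow 0 (pureY_subst1_X1 φ) q.2 _ (by rw [DD_apply0]; omega), mul_zero]
      · have hx1 : x.1 = m := by omega
        rw [h2, hx1, show m - m = 0 by omega, show 1 - 0 = 1 by omega, coeff_s1_pow_01 h0 h1,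
          mul_zero]
    · rw [pure_pow 1 (pureX_subst1_X0 φ) q.1 _ (by rw [DD_apply1]; omega), zero_mul]
  rw [hin, mul_zero]

/-- Each coefficient of a homomorphism with vanishing linear term is killed by its index. -/
theorem nat_mul_coeff_eq_zero {F G : MvPowerSeries (Fin 2) R} (hF : IsFGL F)
    {φ : PowerSeries R} (hφ : IsFGLHom F G φ) (h1 : PowerSeries.coeff 1 φ = 0) (k : ℕ) :
    (k : R) * PowerSeries.coeff k φ = 0 := by
  classical
  have key : ∀ m : ℕ, ∑ k ∈ range (m + 2),
      PowerSeries.coeff k φ * ((k : R) * MvPowerSeries.coeff (DD (m + 1 - k) 1) F) = 0 := by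
    intro m
    have hc := congrArg (MvPowerSeries.coeff (DD m 1)) hφ.hom
    rw [subst1_coeff_raw, degSum_DD, coeff_rhs_vanish hφ.constantCoeff_eq_zero h1 m] at hc
    rw [← hc]
    refine Finset.sum_congr rfl fun k hk => ?_
    rw [Finset.mem_range] at hk
    rw [Fk1 hF k m (by omega)]
  induction k using Nat.strong_induction_on with
  | _ k ih =>
    match k with
    | 0 => simp
    | (K + 1) =>
      have hkey := key K
      rw [Finset.sum_range_succ] at hkey
      have hothers : ∑ k ∈ range (K + 1),
          PowerSeries.coeff k φ * ((k : R) * MvPowerSeries.coeff (DD (K + 1 - k) 1) F) =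
          0 := by
        refine Finset.sum_eq_zero fun k hk => ?_
        rw [Finset.mem_range] at hk
        have := ih k (by omega)
        calc PowerSeries.coeff k φ * ((k : R) * MvPowerSeries.coeff (DD (K + 1 - k) 1) F)
            = ((k : R) * PowerSeries.coeff k φ) * MvPowerSeries.coeff (DD (K + 1 - k) 1) F :=
              by ring
          _ = 0 := by rw [this, zero_mul]
      rw [hothers, zero_add, show K + 1 - (K + 1) = 0 by omega, coeff_F_X1 hF, if_pos rfl,
        mul_one] at hkey
      rw [mul_comm]
      exact hkey

theorem coeff_eq_zero_of_not_dvd {p : ℕ} (hp : p.Prime) (hpR : (p : R) = 0)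
    {F G : MvPowerSeries (Fin 2) R} (hF : IsFGL F) {φ : PowerSeries R}
    (hφ : IsFGLHom F G φ) (h1 : PowerSeries.coeff 1 φ = 0) {k : ℕ} (hk : ¬ p ∣ k) :
    PowerSeries.coeff k φ = 0 := by
  have hmul := nat_mul_coeff_eq_zero hF hφ h1 k
  have hcop : Nat.Coprime p k := (Nat.Prime.coprime_iff_not_dvd hp).mpr hk
  have hgcd := Nat.gcd_eq_gcd_ab p k
  rw [hcop] at hgcd
  have : (1 : R) = (k : R) * ((Nat.gcdB p k : ℤ) : R) := by
    have := congrArg (fun z : ℤ => ((z : ℤ) : R)) hgcd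
    push_cast at this
    rw [hpR] at this
    simpa using this
  calc PowerSeries.coeff k φ = 1 * PowerSeries.coeff k φ := (one_mul _).symm
    _ = ((Nat.gcdB p k : ℤ) : R) * ((k : R) * PowerSeries.coeff k φ) := by rw [this]; ring
    _ = 0 := by rw [hmul, mul_zero]

end FGL

namespace FGL
open MvPowerSeries Finset

variable {R : Type} [CommRing R] {σ : Type} {p : ℕ}

theorem wop_pow (hp : 0 < p) (A : MvPowerSeries σ R) (k : ℕ) :
    (wop p A) ^ k = wop p (A ^ k) := by
  induction k with
  | zero => rw [pow_zero, pow_zero, wop_one hp]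
  | succ k ih => rw [pow_succ, pow_succ, ih, wop_mul hp]

theorem wop_X (hp : 0 < p) (i : σ) :
    wop p (MvPowerSeries.X i : MvPowerSeries σ R) = (MvPowerSeries.X i) ^ p := by
  rw [MvPowerSeries.X_pow_eq, MvPowerSeries.X, wop_monomial hp, Finsupp.smul_single,
    smul_eq_mul, mul_one]

theorem constantCoeff_wop (hp : 0 < p) (A : MvPowerSeries σ R) :
    MvPowerSeries.constantCoeff (wop p A) = MvPowerSeries.constantCoeff A := by
  rw [← MvPowerSeries.coeff_zero_eq_constantCoeff_apply,
    ← MvPowerSeries.coeff_zero_eq_constantCoeff_apply, show (0 : σ →₀ ℕ) = p • 0 by simp,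
    coeff_wop_smul hp, smul_zero]

theorem subst1_wop (hp : 0 < p) (ψ : PowerSeries R) {A : MvPowerSeries σ R}
    (hA : MvPowerSeries.constantCoeff A = 0) :
    subst1 ψ (wop p A) = wop p (subst1 ψ A) := by
  ext d
  by_cases h : ∀ e : σ →₀ ℕ, d ≠ p • e
  · rw [coeff_wop_of_ne _ h, subst1_coeff_raw]
    refine Finset.sum_eq_zero fun k _ => ?_
    rw [wop_pow hp, coeff_wop_of_ne _ h, mul_zero]
  · obtain ⟨e, rfl⟩ := wop_eq_form h
    rw [coeff_wop_smul hp, subst1_coeff_raw,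
      subst1_coeff hA (degSum_mono (by
        rw [Finsupp.le_def]
        intro i
        rw [Finsupp.smul_apply, smul_eq_mul]
        exact Nat.le_mul_of_pos_left _ hp) : degSum e ≤ degSum (p • e))]
    refine Finset.sum_congr rfl fun k _ => ?_
    rw [wop_pow hp, coeff_wop_smul hp]

theorem subst2_wop (hp : 0 < p) (G : MvPowerSeries (Fin 2) R) {a b : MvPowerSeries σ R}
    (ha : MvPowerSeries.constantCoeff a = 0)
    (hb : MvPowerSeries.constantCoeff b = 0) :
    subst2 G (wop p a) (wop p b) = wop p (subst2 G a b) := by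
  ext d
  by_cases h : ∀ e : σ →₀ ℕ, d ≠ p • e
  · rw [coeff_wop_of_ne _ h, subst2_coeff_raw]
    refine Finset.sum_eq_zero fun q _ => ?_
    rw [wop_pow hp, wop_pow hp, ← wop_mul hp, coeff_wop_of_ne _ h, mul_zero]
  · obtain ⟨e, rfl⟩ := wop_eq_form h
    rw [coeff_wop_smul hp, subst2_coeff_raw,
      subst2_coeff ha hb (degSum_mono (by
        rw [Finsupp.le_def]
        intro i
        rw [Finsupp.smul_apply, smul_eq_mul]
        exact Nat.le_mul_of_pos_left _ hp) : degSum e ≤ degSum (p • e))]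
    refine Finset.sum_congr rfl fun q _ => ?_
    rw [wop_pow hp, wop_pow hp, ← wop_mul hp, coeff_wop_smul hp]

theorem subst1_X_self (φ : PowerSeries R) :
    subst1 φ (MvPowerSeries.X () : MvPowerSeries Unit R) = φ := by
  classical
  ext n
  have h : PowerSeries.coeff (R := R) n = MvPowerSeries.coeff (Finsupp.single () n) :=
    PowerSeries.coeff_def (by simp)
  rw [h, coeff_subst1_X, degSum_single, if_pos rfl, h]

theorem subst1_factor (hp : 0 < p) {φ : PowerSeries R}
    (hvan : ∀ k : ℕ, ¬ p ∣ k → PowerSeries.coeff k φ = 0)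
    {s : MvPowerSeries σ R} (hs : MvPowerSeries.constantCoeff s = 0) :
    subst1 φ s = subst1 (PowerSeries.mk fun n => PowerSeries.coeff (p * n) φ) (s ^ p) := by
  classical
  ext d
  rw [subst1_coeff_raw, subst1_coeff_raw]
  set N := degSum d with hN
  have hL : ∑ k ∈ (range (N + 1)).filter (p ∣ ·),
      PowerSeries.coeff k φ * MvPowerSeries.coeff d (s ^ k) =
      ∑ k ∈ range (N + 1), PowerSeries.coeff k φ * MvPowerSeries.coeff d (s ^ k) := by
    refine Finset.sum_filter_of_ne fun k _ hne => ?_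
    by_contra hdvd
    exact hne (by rw [hvan k hdvd, zero_mul])
  have hR : ∑ j ∈ (range (N + 1)).filter (fun j => p * j ≤ N),
      PowerSeries.coeff j (PowerSeries.mk fun n => PowerSeries.coeff (p * n) φ) *
        MvPowerSeries.coeff d ((s ^ p) ^ j) =
      ∑ j ∈ range (N + 1),
      PowerSeries.coeff j (PowerSeries.mk fun n => PowerSeries.coeff (p * n) φ) *
        MvPowerSeries.coeff d ((s ^ p) ^ j) := by
    refine Finset.sum_filter_of_ne fun j _ hne => ?_
    by_contra hgt
    refine hne ?_
    rw [← pow_mul, coeff_pow_eq_zero hs (by omega), mul_zero]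
  rw [← hL, ← hR]
  refine Finset.sum_nbij' (fun k => k / p) (fun j => p * j) ?_ ?_ ?_ ?_ ?_
  · intro k hk
    simp only [Finset.mem_filter, Finset.mem_range] at hk ⊢
    obtain ⟨hk1, j, rfl⟩ := hk
    rw [Nat.mul_div_cancel_left _ hp]
    constructor
    · calc j ≤ p * j := Nat.le_mul_of_pos_left _ hp
        _ < N + 1 := hk1
    · omega
  · intro j hj
    simp only [Finset.mem_filter, Finset.mem_range] at hj ⊢
    exact ⟨by omega, Dvd.intro j rfl⟩
  · intro k hk
    simp only [Finset.mem_filter, Finset.mem_range] at hk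
    exact Nat.mul_div_cancel' hk.2
  · intro j hj
    exact Nat.mul_div_cancel_left _ hp
  · intro k hk
    simp only [Finset.mem_filter, Finset.mem_range] at hk
    rw [PowerSeries.coeff_mk, ← pow_mul, Nat.mul_div_cancel' hk.2]

end FGL

end


noncomputable section

/-- The series obtained from `F` by raising each coefficient to the `p`-th power; in
characteristic `p` this is the Frobenius twist `F^(p)`. -/
def FGL.frobTwist {R : Type} [CommRing R] (p : ℕ) (F : MvPowerSeries (Fin 2) R) :
    MvPowerSeries (Fin 2) R :=
  fun d => (MvPowerSeries.coeff d F) ^ p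

namespace FGL

variable {R : Type} [CommRing R] {p : ℕ}

theorem frobTwist_eq_map (hp : p.Prime) (hpR : (p : R) = 0) (F : MvPowerSeries (Fin 2) R) :
    frobTwist p F = MvPowerSeries.map (frobHom hp hpR) F := by
  ext d
  rw [MvPowerSeries.coeff_map]
  rfl


end FGL

/-- **Homomorphisms with vanishing derivative factor through Frobenius.**  Let `p` be a
prime and `R` a commutative ring with `p · 1 = 0`.  If `φ : F → G` is a homomorphism of
formal group laws whose coefficient of `T` is `0`, then `φ(T) = ψ(T^p)` for some power
series `ψ` with zero constant term, the Frobenius twist `F^(p)` is a formal group law,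
and `ψ` is a homomorphism of formal group laws `F^(p) → G`. -/
theorem fgl_hom_factors_through_frobenius {p : ℕ} (hp : p.Prime) {R : Type} [CommRing R]
    (hpR : (p : R) = 0) {F G : MvPowerSeries (Fin 2) R} (hF : IsFGL F) (hG : IsFGL G)
    {φ : PowerSeries R} (hφ : IsFGLHom F G φ) (h1 : PowerSeries.coeff 1 φ = 0) :
    ∃ ψ : PowerSeries R, PowerSeries.constantCoeff ψ = 0 ∧
      φ = FGL.subst1 ψ ((PowerSeries.X : PowerSeries R) ^ p : MvPowerSeries Unit R) ∧
      IsFGL (FGL.frobTwist p F) ∧ IsFGLHom (FGL.frobTwist p F) G ψ := by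
  classical
  have hp0 : 0 < p := hp.pos
  set f : R →+* R := FGL.frobHom hp hpR with hf
  have hvan : ∀ k : ℕ, ¬ p ∣ k → PowerSeries.coeff k φ = 0 := fun k hk =>
    FGL.coeff_eq_zero_of_not_dvd hp hpR hF hφ h1 hk
  set ψ : PowerSeries R := PowerSeries.mk fun n => PowerSeries.coeff (p * n) φ with hψ
  have hψ0 : PowerSeries.constantCoeff ψ = 0 := by
    rw [← PowerSeries.coeff_zero_eq_constantCoeff_apply, hψ, PowerSeries.coeff_mk, mul_zero,
      PowerSeries.coeff_zero_eq_constantCoeff_apply]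
    exact hφ.constantCoeff_eq_zero
  have hXc : MvPowerSeries.constantCoeff (MvPowerSeries.X () : MvPowerSeries Unit R) = 0 :=
    MvPowerSeries.constantCoeff_X ()
  have hfac : φ = FGL.subst1 ψ ((PowerSeries.X : PowerSeries R) ^ p : MvPowerSeries Unit R) := by
    conv_lhs => rw [← FGL.subst1_X_self φ]
    rw [FGL.subst1_factor hp0 hvan hXc]
    rfl
  have hFt : FGL.frobTwist p F = MvPowerSeries.map f F := FGL.frobTwist_eq_map hp hpR F
  have hFGLt : IsFGL (FGL.frobTwist p F) := by
    rw [hFt]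
    constructor
    · show FGL.subst2 (MvPowerSeries.map f F)
          (MvPowerSeries.X () : MvPowerSeries Unit R) 0 = MvPowerSeries.X ()
      have h := FGL.map_subst2 f F (MvPowerSeries.X () : MvPowerSeries Unit R) 0
      rw [map_zero, MvPowerSeries.map_X] at h
      have hsx : FGL.subst2 F (MvPowerSeries.X () : MvPowerSeries Unit R) 0 =
          MvPowerSeries.X () := hF.substXzero
      rw [h, hsx, MvPowerSeries.map_X]
    · show FGL.subst2 (MvPowerSeries.map f F) 0
          (MvPowerSeries.X () : MvPowerSeries Unit R) = MvPowerSeries.X ()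
      have h := FGL.map_subst2 f F 0 (MvPowerSeries.X () : MvPowerSeries Unit R)
      rw [map_zero, MvPowerSeries.map_X] at h
      have hsx : FGL.subst2 F 0 (MvPowerSeries.X () : MvPowerSeries Unit R) =
          MvPowerSeries.X () := hF.substZeroX
      rw [h, hsx, MvPowerSeries.map_X]
    · have h := FGL.map_subst2 f F (MvPowerSeries.X (1 : Fin 2)) (MvPowerSeries.X (0 : Fin 2))
      rw [MvPowerSeries.map_X, MvPowerSeries.map_X] at h
      rw [h, hF.comm]
    · have h1' := FGL.map_subst2 f F (MvPowerSeries.X (0 : Fin 3)) (MvPowerSeries.X (1 : Fin 3))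
      have h2' := FGL.map_subst2 f F (MvPowerSeries.X (1 : Fin 3)) (MvPowerSeries.X (2 : Fin 3))
      rw [MvPowerSeries.map_X, MvPowerSeries.map_X] at h1' h2'
      have h3' := FGL.map_subst2 f F
        (FGL.subst2 F (MvPowerSeries.X (0 : Fin 3)) (MvPowerSeries.X (1 : Fin 3)))
        (MvPowerSeries.X (2 : Fin 3))
      rw [MvPowerSeries.map_X] at h3'
      have h4' := FGL.map_subst2 f F (MvPowerSeries.X (0 : Fin 3))
        (FGL.subst2 F (MvPowerSeries.X (1 : Fin 3)) (MvPowerSeries.X (2 : Fin 3)))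
      rw [MvPowerSeries.map_X] at h4'
      rw [h1', h2', h3', h4', hF.assoc]
  have hs0c : MvPowerSeries.constantCoeff
      (FGL.subst1 ψ (MvPowerSeries.X (0 : Fin 2))) = 0 := by
    rw [FGL.constantCoeff_subst1, hψ0]
  have hs1c : MvPowerSeries.constantCoeff
      (FGL.subst1 ψ (MvPowerSeries.X (1 : Fin 2))) = 0 := by
    rw [FGL.constantCoeff_subst1, hψ0]
  have hFtwc : MvPowerSeries.constantCoeff (FGL.frobTwist p F) = 0 := by
    rw [hFt, MvPowerSeries.constantCoeff_map, FGL.constantCoeff_F hF, map_zero]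
  have hhom : FGL.subst1 ψ (FGL.frobTwist p F) =
      FGL.subst2 G (FGL.subst1 ψ (MvPowerSeries.X (0 : Fin 2)))
        (FGL.subst1 ψ (MvPowerSeries.X (1 : Fin 2))) := by
    apply FGL.wop_injective hp0
    calc FGL.wop p (FGL.subst1 ψ (FGL.frobTwist p F))
        = FGL.subst1 ψ (FGL.wop p (FGL.frobTwist p F)) :=
          (FGL.subst1_wop hp0 ψ hFtwc).symm
      _ = FGL.subst1 ψ (F ^ p) := by rw [hFt, ← FGL.pow_p_eq_wop hp hpR F]
      _ = FGL.subst1 φ F := (FGL.subst1_factor hp0 hvan (FGL.constantCoeff_F hF)).symm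
      _ = FGL.subst2 G (FGL.subst1 φ (MvPowerSeries.X (0 : Fin 2)))
            (FGL.subst1 φ (MvPowerSeries.X (1 : Fin 2))) := hφ.hom
      _ = FGL.subst2 G (FGL.subst1 ψ ((MvPowerSeries.X (0 : Fin 2)) ^ p))
            (FGL.subst1 ψ ((MvPowerSeries.X (1 : Fin 2)) ^ p)) := by
          rw [FGL.subst1_factor hp0 hvan (MvPowerSeries.constantCoeff_X (0 : Fin 2)),
            FGL.subst1_factor hp0 hvan (MvPowerSeries.constantCoeff_X (1 : Fin 2))]
      _ = FGL.subst2 G (FGL.subst1 ψ (FGL.wop p (MvPowerSeries.X (0 : Fin 2))))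
            (FGL.subst1 ψ (FGL.wop p (MvPowerSeries.X (1 : Fin 2)))) := by
          rw [FGL.wop_X hp0, FGL.wop_X hp0]
      _ = FGL.subst2 G (FGL.wop p (FGL.subst1 ψ (MvPowerSeries.X (0 : Fin 2))))
            (FGL.wop p (FGL.subst1 ψ (MvPowerSeries.X (1 : Fin 2)))) := by
          rw [FGL.subst1_wop hp0 ψ (MvPowerSeries.constantCoeff_X (0 : Fin 2)),
            FGL.subst1_wop hp0 ψ (MvPowerSeries.constantCoeff_X (1 : Fin 2))]
      _ = FGL.wop p (FGL.subst2 G (FGL.subst1 ψ (MvPowerSeries.X (0 : Fin 2)))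
            (FGL.subst1 ψ (MvPowerSeries.X (1 : Fin 2)))) := FGL.subst2_wop hp0 G hs0c hs1c
  exact ⟨ψ, hψ0, hfac, hFGLt, ⟨hψ0, hhom⟩⟩

end
end

section
/- Let F(X,Y) = X + Y + XY be the multiplicative formal group law over the ring ℤ_p of p-adic integers (Mathlib's PadicInt). Then the map sending an endomorphism φ of F (a homomorphism of formal group laws φ : F → F over ℤ_p) to its linear coefficient (the coefficient of T in φ) is a bijection from the set of endomorphisms of F onto ℤ_p; under this bijection the automorphisms of F (endomorphisms invertible under composition) correspond exactly to the units ℤ_p^×. In particular Aut(Ĝ_m over ℤ_p) ≅ ℤ_p^×. -/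
noncomputable section

/-- The multiplicative formal group law `F(X,Y) = X + Y + XY` over the `p`-adic
integers. -/
def FGL.Gm (p : ℕ) [Fact p.Prime] : MvPowerSeries (Fin 2) ℤ_[p] :=
  MvPowerSeries.X 0 + MvPowerSeries.X 1 + MvPowerSeries.X 0 * MvPowerSeries.X 1

namespace FGLAux
open Finset

variable {σ : Type} {R : Type} [CommRing R]


variable {σ : Type} {R : Type} [CommRing R]

lemma degSum_add (u v : σ →₀ ℕ) : FGL.degSum (u + v) = FGL.degSum u + FGL.degSum v :=
  Finsupp.sum_add_index' (fun _ => rfl) (fun _ _ _ => rfl)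

lemma degSum_single (i : σ) (k : ℕ) : FGL.degSum (Finsupp.single i k) = k :=
  Finsupp.sum_single_index rfl

lemma le_degSum (d : σ →₀ ℕ) (i : σ) : d i ≤ FGL.degSum d := by
  by_cases h : i ∈ d.support
  · exact Finset.single_le_sum (f := fun a => d a) (fun a _ => Nat.zero_le _) h
  · simp [Finsupp.notMem_support_iff.mp h]

lemma degSum_eq_zero {d : σ →₀ ℕ} (h : FGL.degSum d = 0) : d = 0 := by
  ext i
  have := le_degSum d i
  simp only [Finsupp.coe_zero, Pi.zero_apply]
  omega

lemma coeff_pow_eq_zero {s : MvPowerSeries σ R}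
    (hs : MvPowerSeries.constantCoeff s = 0) :
    ∀ (k : ℕ) (d : σ →₀ ℕ), FGL.degSum d < k → MvPowerSeries.coeff d (s ^ k) = 0 := by
  classical
  intro k
  induction k with
  | zero => exact fun d h => absurd h (Nat.not_lt_zero _)
  | succ k ih =>
    intro d h
    rw [pow_succ, mul_comm, MvPowerSeries.coeff_mul]
    apply Finset.sum_eq_zero
    rintro ⟨x, y⟩ hxy
    rw [Finset.HasAntidiagonal.mem_antidiagonal] at hxy
    by_cases hx : x = 0
    · subst hx
      rw [show MvPowerSeries.coeff 0 s = 0 from hs, zero_mul]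
    · have h1 : 1 ≤ FGL.degSum x := by
        rcases Nat.eq_zero_or_pos (FGL.degSum x) with h0 | h0
        · exact absurd (degSum_eq_zero h0) hx
        · exact h0
      have h2 : FGL.degSum x + FGL.degSum y = FGL.degSum d := by
        rw [← degSum_add, hxy]
      rw [ih y (by omega), mul_zero]

lemma coeff_subst1 (φ : PowerSeries R) {s : MvPowerSeries σ R}
    (hs : MvPowerSeries.constantCoeff s = 0) (d : σ →₀ ℕ) {M : ℕ}
    (hM : FGL.degSum d ≤ M) :
    MvPowerSeries.coeff d (FGL.subst1 φ s) =
      ∑ k ∈ Finset.range (M + 1),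
        PowerSeries.coeff k φ * MvPowerSeries.coeff d (s ^ k) := by
  have h1 : MvPowerSeries.coeff d (FGL.subst1 φ s) =
      ∑ k ∈ Finset.range (FGL.degSum d + 1),
        PowerSeries.coeff k φ * MvPowerSeries.coeff d (s ^ k) := by
    rw [show MvPowerSeries.coeff d (FGL.subst1 φ s)
        = MvPowerSeries.coeff d (∑ k ∈ Finset.range (FGL.degSum d + 1),
            MvPowerSeries.C (σ := σ) (R := R) (PowerSeries.coeff k φ) * s ^ k) from rfl,
      map_sum]
    exact Finset.sum_congr rfl fun k _ => MvPowerSeries.coeff_C_mul _ _ _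
  rw [h1]
  apply Finset.sum_subset (Finset.range_subset_range.2 (by omega))
  intro k _ hk
  rw [Finset.mem_range, not_lt] at hk
  rw [coeff_pow_eq_zero hs k d (by omega), mul_zero]

/-- The "multiplicative" two-variable series over any ring. -/
def G (R : Type) [CommRing R] : MvPowerSeries (Fin 2) R :=
  MvPowerSeries.X 0 + MvPowerSeries.X 1 + MvPowerSeries.X 0 * MvPowerSeries.X 1

lemma pair_eq_iff (q1 q2 r1 r2 : ℕ) :
    (Finsupp.single (0 : Fin 2) q1 + Finsupp.single 1 q2
      = Finsupp.single 0 r1 + Finsupp.single 1 r2) ↔ (q1 = r1 ∧ q2 = r2) := by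
  constructor
  · intro h
    have h0 := DFunLike.congr_fun h 0
    have h1 := DFunLike.congr_fun h 1
    simp [Finsupp.single_apply] at h0 h1
    exact ⟨h0, h1⟩
  · rintro ⟨rfl, rfl⟩; rfl

lemma coeff_G (q1 q2 : ℕ) :
    MvPowerSeries.coeff (Finsupp.single 0 q1 + Finsupp.single 1 q2) (G R) =
      (if (q1, q2) = (1, 0) then 1 else 0) + (if (q1, q2) = (0, 1) then 1 else 0) +
        (if (q1, q2) = (1, 1) then 1 else 0) := by
  have hX0 : (MvPowerSeries.X 0 : MvPowerSeries (Fin 2) R)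
      = MvPowerSeries.monomial (Finsupp.single 0 1 + Finsupp.single 1 0) 1 := by
    rw [Finsupp.single_zero, add_zero, ← MvPowerSeries.X_pow_eq, pow_one]
  have hX1 : (MvPowerSeries.X 1 : MvPowerSeries (Fin 2) R)
      = MvPowerSeries.monomial (Finsupp.single 0 0 + Finsupp.single 1 1) 1 := by
    rw [Finsupp.single_zero, zero_add, ← MvPowerSeries.X_pow_eq, pow_one]
  have hX01 : (MvPowerSeries.X 0 * MvPowerSeries.X 1 : MvPowerSeries (Fin 2) R)
      = MvPowerSeries.monomial (Finsupp.single 0 1 + Finsupp.single 1 1) 1 := by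
    rw [show (MvPowerSeries.X 0 : MvPowerSeries (Fin 2) R) = MvPowerSeries.monomial (Finsupp.single 0 1) 1
        from by rw [← MvPowerSeries.X_pow_eq, pow_one],
      show (MvPowerSeries.X 1 : MvPowerSeries (Fin 2) R) = MvPowerSeries.monomial (Finsupp.single 1 1) 1
        from by rw [← MvPowerSeries.X_pow_eq, pow_one]]
    rw [MvPowerSeries.monomial_mul_monomial, one_mul]
  rw [G, map_add, map_add, hX01, hX0, hX1]
  classical
  rw [MvPowerSeries.coeff_monomial, MvPowerSeries.coeff_monomial, MvPowerSeries.coeff_monomial]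
  simp only [pair_eq_iff, Prod.mk.injEq]

lemma coeff_subst2 (F : MvPowerSeries (Fin 2) R) (a b : MvPowerSeries σ R) (d : σ →₀ ℕ) :
    MvPowerSeries.coeff d (FGL.subst2 F a b) =
      ∑ q ∈ Finset.range (FGL.degSum d + 1) ×ˢ Finset.range (FGL.degSum d + 1),
        MvPowerSeries.coeff (Finsupp.single 0 q.1 + Finsupp.single 1 q.2) F *
          MvPowerSeries.coeff d (a ^ q.1 * b ^ q.2) := by
  rw [show MvPowerSeries.coeff d (FGL.subst2 F a b)
      = MvPowerSeries.coeff d (∑ q ∈ Finset.range (FGL.degSum d + 1) ×ˢ Finset.range (FGL.degSum d + 1),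
          MvPowerSeries.C (σ := σ) (R := R)
            (MvPowerSeries.coeff (Finsupp.single 0 q.1 + Finsupp.single 1 q.2) F) *
          (a ^ q.1 * b ^ q.2)) from rfl, map_sum]
  exact Finset.sum_congr rfl fun q _ => MvPowerSeries.coeff_C_mul _ _ _

lemma subst2_G (a b : MvPowerSeries σ R) (ha : MvPowerSeries.constantCoeff a = 0)
    (hb : MvPowerSeries.constantCoeff b = 0) :
    FGL.subst2 (G R) a b = a + b + a * b := by
  classical
  ext d
  rw [coeff_subst2]
  simp only [coeff_G]
  by_cases hd : FGL.degSum d = 0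
  · have hd0 : d = 0 := degSum_eq_zero hd
    subst hd0
    rw [hd]
    rw [show Finset.range (0 + 1) = {0} from rfl]
    simp only [Finset.singleton_product_singleton, Finset.sum_singleton]
    simp only [map_add, MvPowerSeries.coeff_zero_eq_constantCoeff, ha, hb, map_mul]
    norm_num [Prod.ext_iff]
  · have h1 : 1 ≤ FGL.degSum d := Nat.pos_of_ne_zero hd
    have expand : ∀ q : ℕ × ℕ,
        ((if q = (1, 0) then (1:R) else 0) + (if q = (0, 1) then 1 else 0) +
          (if q = (1, 1) then 1 else 0)) * MvPowerSeries.coeff d (a ^ q.1 * b ^ q.2)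
        = (if q = ((1:ℕ), (0:ℕ)) then MvPowerSeries.coeff d (a ^ q.1 * b ^ q.2) else 0)
          + (if q = ((0:ℕ), (1:ℕ)) then MvPowerSeries.coeff d (a ^ q.1 * b ^ q.2) else 0)
          + (if q = ((1:ℕ), (1:ℕ)) then MvPowerSeries.coeff d (a ^ q.1 * b ^ q.2) else 0) := by
      intro q
      split_ifs <;> simp_all <;> ring
    rw [Finset.sum_congr rfl fun q _ => expand q]
    rw [Finset.sum_add_distrib, Finset.sum_add_distrib]
    have hmem : ∀ i j : ℕ, i ≤ 1 → j ≤ 1 →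
        ((i, j) : ℕ × ℕ) ∈ Finset.range (FGL.degSum d + 1) ×ˢ Finset.range (FGL.degSum d + 1) := by
      intro i j hi hj
      rw [Finset.mem_product, Finset.mem_range, Finset.mem_range]
      omega
    rw [Finset.sum_ite_eq' _ ((1:ℕ), (0:ℕ)), Finset.sum_ite_eq' _ ((0:ℕ), (1:ℕ)),
      Finset.sum_ite_eq' _ ((1:ℕ), (1:ℕ))]
    rw [if_pos (hmem 1 0 le_rfl (by omega)), if_pos (hmem 0 1 (by omega) le_rfl),
      if_pos (hmem 1 1 le_rfl le_rfl)]
    simp only [pow_one, pow_zero, mul_one, one_mul, map_add]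

/-- `subst1` at a variable. -/
lemma coeff_subst1_X [DecidableEq σ] (φ : PowerSeries R) (i : σ) (d : σ →₀ ℕ) :
    MvPowerSeries.coeff d (FGL.subst1 φ (MvPowerSeries.X i)) =
      if d = Finsupp.single i (d i) then PowerSeries.coeff (d i) φ else 0 := by
  classical
  rw [coeff_subst1 φ (MvPowerSeries.constantCoeff_X i) d (le_refl (FGL.degSum d))]
  simp only [MvPowerSeries.coeff_X_pow]
  by_cases hd : d = Finsupp.single i (d i)
  · rw [if_pos hd]
    have key : ∀ k : ℕ, (d = Finsupp.single i k) ↔ (k = d i) := by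
      intro k
      constructor
      · intro h
        rw [h, Finsupp.single_eq_same]
      · intro h; rw [h]; exact hd
    calc ∑ k ∈ Finset.range (FGL.degSum d + 1),
            PowerSeries.coeff k φ * (if d = Finsupp.single i k then 1 else 0)
        = ∑ k ∈ Finset.range (FGL.degSum d + 1),
            (if k = d i then PowerSeries.coeff k φ else 0) := by
          refine Finset.sum_congr rfl fun k _ => ?_
          rw [if_congr (key k) rfl rfl]
          split_ifs <;> simp
      _ = PowerSeries.coeff (d i) φ := by
          rw [Finset.sum_ite_eq' _ (d i)]
          rw [if_pos]
          rw [Finset.mem_range]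
          have := le_degSum d i
          omega
  · rw [if_neg hd]
    apply Finset.sum_eq_zero
    intro k _
    rw [if_neg, mul_zero]
    intro h
    apply hd
    have hk : d i = k := by rw [h, Finsupp.single_eq_same]
    rw [hk]
    exact h

lemma constantCoeff_subst1 (φ : PowerSeries R) (s : MvPowerSeries σ R) :
    MvPowerSeries.constantCoeff (FGL.subst1 φ s) = PowerSeries.constantCoeff φ := by
  have h0 : FGL.degSum (0 : σ →₀ ℕ) = 0 := by
    simp [FGL.degSum]
  rw [← MvPowerSeries.coeff_zero_eq_constantCoeff]
  rw [show MvPowerSeries.coeff (0 : σ →₀ ℕ) (FGL.subst1 φ s)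
      = MvPowerSeries.coeff (0 : σ →₀ ℕ) (∑ k ∈ Finset.range (FGL.degSum (0 : σ →₀ ℕ) + 1),
          MvPowerSeries.C (σ := σ) (R := R) (PowerSeries.coeff k φ) * s ^ k) from rfl, h0]
  rw [show Finset.range (0 + 1) = {0} from rfl, Finset.sum_singleton]
  simp [PowerSeries.coeff_zero_eq_constantCoeff]

/-- Substituting `X` into `φ` gives back `φ`. -/
lemma subst1_X (φ : PowerSeries R) :
    FGL.subst1 φ (PowerSeries.X : MvPowerSeries Unit R) = φ := by
  apply MvPowerSeries.ext
  intro d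
  have hd : d = Finsupp.single () (d ()) := by
    ext
    show d () = (Finsupp.single () (d ())) ()
    rw [Finsupp.single_eq_same]
  rw [show (PowerSeries.X : MvPowerSeries Unit R) = MvPowerSeries.X () from rfl]
  rw [coeff_subst1_X φ () d, if_pos hd]
  conv_rhs => rw [hd]
  rfl

lemma coeff_unit (φ : PowerSeries R) (e : Unit →₀ ℕ) :
    MvPowerSeries.coeff e φ = PowerSeries.coeff (e ()) φ := by
  have he : e = Finsupp.single () (e ()) := by
    ext
    show e () = _
    rw [Finsupp.single_eq_same]
  conv_lhs => rw [he]
  rfl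

lemma constantCoeff_G : MvPowerSeries.constantCoeff (G R) = 0 := by
  simp [G]

section Padic

variable {p : ℕ} [Fact p.Prime]

/-- The series `(1+T)^a - 1` for `a : ℤ_[p]`. -/
def Eser (p : ℕ) [Fact p.Prime] (a : ℤ_[p]) : PowerSeries ℤ_[p] :=
  PowerSeries.mk fun n => if n = 0 then 0 else Ring.choose a n

lemma coeff_Eser (a : ℤ_[p]) (n : ℕ) :
    PowerSeries.coeff n (Eser p a) = if n = 0 then 0 else Ring.choose a n :=
  PowerSeries.coeff_mk _ _

lemma constantCoeff_Eser (a : ℤ_[p]) :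
    MvPowerSeries.constantCoeff (Eser p a) = 0 := by
  rw [← MvPowerSeries.coeff_zero_eq_constantCoeff_apply, coeff_unit, coeff_Eser]
  simp

lemma coeff1_Eser (a : ℤ_[p]) : PowerSeries.coeff 1 (Eser p a) = a := by
  rw [coeff_Eser]
  simp [Ring.choose_one_right]

lemma continuous_coeff_Eser (n : ℕ) :
    Continuous fun a : ℤ_[p] => PowerSeries.coeff n (Eser p a) := by
  simp only [coeff_Eser]
  by_cases h : n = 0
  · simp only [h, if_true, if_pos]
    exact continuous_const
  · simp only [h, if_false]
    exact PadicInt.continuous_choose n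

lemma eq_on_nat_dense {f g : ℤ_[p] → ℤ_[p]} (hf : Continuous f) (hg : Continuous g)
    (h : ∀ m : ℕ, f (m : ℤ_[p]) = g (m : ℤ_[p])) : ∀ a, f a = g a := by
  have heq : f = g := (PadicInt.denseRange_natCast).equalizer hf hg (funext fun m => h m)
  exact fun a => congrFun heq a

lemma subst1_nat (m : ℕ) {s : MvPowerSeries σ ℤ_[p]}
    (hs : MvPowerSeries.constantCoeff s = 0) :
    FGL.subst1 (Eser p (m : ℤ_[p])) s = (1 + s) ^ m - 1 := by
  classical
  apply MvPowerSeries.ext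
  intro d
  set N := FGL.degSum d with hN
  set M := max N m with hM
  rw [coeff_subst1 _ hs d (le_max_left N m)]
  have hpow : (1 + s) ^ m
      = ∑ k ∈ Finset.range (m + 1), s ^ k * ((Nat.choose m k : ℕ) : MvPowerSeries σ ℤ_[p]) := by
    rw [add_comm, add_pow]
    exact Finset.sum_congr rfl fun k _ => by rw [one_pow, mul_one]
  rw [map_sub, hpow, map_sum]
  have hterm : ∀ k, MvPowerSeries.coeff d
        (s ^ k * ((Nat.choose m k : ℕ) : MvPowerSeries σ ℤ_[p]))
      = (Nat.choose m k : ℤ_[p]) * MvPowerSeries.coeff d (s ^ k) := by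
    intro k
    rw [show ((Nat.choose m k : ℕ) : MvPowerSeries σ ℤ_[p])
        = MvPowerSeries.C (σ := σ) (R := ℤ_[p]) ((Nat.choose m k : ℕ) : ℤ_[p])
        from (map_natCast (MvPowerSeries.C (σ := σ) (R := ℤ_[p])) _).symm]
    rw [mul_comm, MvPowerSeries.coeff_C_mul]
  rw [Finset.sum_congr rfl fun k _ => hterm k]
  rw [show (∑ k ∈ Finset.range (m + 1),
        (Nat.choose m k : ℤ_[p]) * MvPowerSeries.coeff d (s ^ k))
      = ∑ k ∈ Finset.range (M + 1),
        (Nat.choose m k : ℤ_[p]) * MvPowerSeries.coeff d (s ^ k) from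
    Finset.sum_subset (Finset.range_subset_range.2 (by omega)) (fun k _ hk => by
      rw [Finset.mem_range, not_lt] at hk
      rw [Nat.choose_eq_zero_of_lt (by omega), Nat.cast_zero, zero_mul])]
  have key : ∀ k, PowerSeries.coeff k (Eser p (m : ℤ_[p]))
        * MvPowerSeries.coeff d (s ^ k)
      = (Nat.choose m k : ℤ_[p]) * MvPowerSeries.coeff d (s ^ k)
        - (if k = 0 then MvPowerSeries.coeff d 1 else 0) := by
    intro k
    rw [coeff_Eser]
    by_cases h : k = 0
    · subst h
      simp [pow_zero]
    · simp only [h, if_false]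
      rw [Ring.choose_natCast]
      ring
  rw [Finset.sum_congr rfl fun k _ => key k, Finset.sum_sub_distrib,
    Finset.sum_ite_eq' _ 0, if_pos (Finset.mem_range.2 (by omega))]

lemma continuous_coeff_mul {A B : ℤ_[p] → MvPowerSeries σ ℤ_[p]}
    (hA : ∀ e, Continuous fun x => MvPowerSeries.coeff e (A x))
    (hB : ∀ e, Continuous fun x => MvPowerSeries.coeff e (B x)) (d : σ →₀ ℕ) :
    Continuous fun x => MvPowerSeries.coeff d (A x * B x) := by
  classical
  simp only [MvPowerSeries.coeff_mul]
  exact continuous_finset_sum _ fun q _ => (hA q.1).mul (hB q.2)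

lemma continuous_coeff_pow {A : ℤ_[p] → MvPowerSeries σ ℤ_[p]}
    (hA : ∀ e, Continuous fun x => MvPowerSeries.coeff e (A x)) (k : ℕ) (d : σ →₀ ℕ) :
    Continuous fun x => MvPowerSeries.coeff d ((A x) ^ k) := by
  induction k generalizing d with
  | zero =>
    simp only [pow_zero]
    exact continuous_const
  | succ k ih =>
    simp only [pow_succ]
    exact continuous_coeff_mul (fun e => ih e) hA d

lemma continuous_coeff_subst1_Eser {s : MvPowerSeries σ ℤ_[p]}
    (hs : MvPowerSeries.constantCoeff s = 0) (d : σ →₀ ℕ) :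
    Continuous fun a : ℤ_[p] => MvPowerSeries.coeff d (FGL.subst1 (Eser p a) s) := by
  have h : (fun a : ℤ_[p] => MvPowerSeries.coeff d (FGL.subst1 (Eser p a) s))
      = fun a => ∑ k ∈ Finset.range (FGL.degSum d + 1),
          PowerSeries.coeff k (Eser p a) * MvPowerSeries.coeff d (s ^ k) := by
    funext a
    exact coeff_subst1 _ hs d le_rfl
  rw [h]
  exact continuous_finset_sum _ fun k _ => (continuous_coeff_Eser k).mul continuous_const

lemma continuous_coeff_subst1_Eser_X [DecidableEq σ] (i : σ) (d : σ →₀ ℕ) :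
    Continuous fun a : ℤ_[p] =>
      MvPowerSeries.coeff d (FGL.subst1 (Eser p a) (MvPowerSeries.X i)) := by
  simp only [coeff_subst1_X]
  by_cases h : d = Finsupp.single i (d i)
  · simp only [if_pos h]
    exact continuous_coeff_Eser (d i)
  · simp only [if_neg h]
    exact continuous_const

lemma subst1_Eser_G (a : ℤ_[p]) :
    FGL.subst1 (Eser p a) (G ℤ_[p]) =
      FGL.subst1 (Eser p a) (MvPowerSeries.X 0) + FGL.subst1 (Eser p a) (MvPowerSeries.X 1)
        + FGL.subst1 (Eser p a) (MvPowerSeries.X 0)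
          * FGL.subst1 (Eser p a) (MvPowerSeries.X 1) := by
  apply MvPowerSeries.ext
  intro d
  refine eq_on_nat_dense
    (f := fun x : ℤ_[p] => MvPowerSeries.coeff d (FGL.subst1 (Eser p x) (G ℤ_[p])))
    (g := fun x : ℤ_[p] => MvPowerSeries.coeff d
      (FGL.subst1 (Eser p x) (MvPowerSeries.X 0) + FGL.subst1 (Eser p x) (MvPowerSeries.X 1)
        + FGL.subst1 (Eser p x) (MvPowerSeries.X 0)
          * FGL.subst1 (Eser p x) (MvPowerSeries.X 1))) ?_ ?_ ?_ a
  · exact continuous_coeff_subst1_Eser constantCoeff_G d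
  · simp only [map_add]
    refine Continuous.add (Continuous.add ?_ ?_) ?_
    · exact continuous_coeff_subst1_Eser_X 0 d
    · exact continuous_coeff_subst1_Eser_X 1 d
    · exact continuous_coeff_mul (fun e => continuous_coeff_subst1_Eser_X 0 e)
        (fun e => continuous_coeff_subst1_Eser_X 1 e) d
  · intro m
    rw [subst1_nat m constantCoeff_G, subst1_nat m (MvPowerSeries.constantCoeff_X 0),
      subst1_nat m (MvPowerSeries.constantCoeff_X 1)]
    congr 1
    have h1 : (1 : MvPowerSeries (Fin 2) ℤ_[p]) + G ℤ_[p]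
        = (1 + MvPowerSeries.X 0) * (1 + MvPowerSeries.X 1) := by
      rw [G]; ring
    rw [h1, mul_pow]
    ring

lemma isHom_Eser (a : ℤ_[p]) : IsFGLHom (FGL.Gm p) (FGL.Gm p) (Eser p a) := by
  constructor
  · exact constantCoeff_Eser a
  · have h2 := subst2_G (FGL.subst1 (Eser p a) (MvPowerSeries.X (0 : Fin 2)))
      (FGL.subst1 (Eser p a) (MvPowerSeries.X (1 : Fin 2)))
      (by rw [constantCoeff_subst1]; exact constantCoeff_Eser a)
      (by rw [constantCoeff_subst1]; exact constantCoeff_Eser a)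
    exact (subst1_Eser_G a).trans h2.symm

lemma Eser_nat (m : ℕ) : Eser p (m : ℤ_[p]) = (1 + PowerSeries.X) ^ m - 1 := by
  conv_lhs => rw [← subst1_X (Eser p (m : ℤ_[p]))]
  exact subst1_nat m (MvPowerSeries.constantCoeff_X ())

lemma subst1_Eser_Eser_natnat (m k : ℕ) :
    FGL.subst1 (Eser p (m : ℤ_[p])) (Eser p (k : ℤ_[p]) : MvPowerSeries Unit ℤ_[p])
      = Eser p ((m : ℤ_[p]) * (k : ℤ_[p])) := by
  rw [subst1_nat m (constantCoeff_Eser (k : ℤ_[p]))]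
  rw [show ((m : ℤ_[p]) * (k : ℤ_[p])) = ((k * m : ℕ) : ℤ_[p]) from by push_cast; ring]
  rw [Eser_nat (k * m), Eser_nat k]
  have h1 : (1 : PowerSeries ℤ_[p]) + ((1 + PowerSeries.X) ^ k - 1)
      = (1 + PowerSeries.X) ^ k := by ring
  rw [h1, ← pow_mul]

lemma subst1_Eser_Eser_nat (a : ℤ_[p]) (k : ℕ) :
    FGL.subst1 (Eser p a) (Eser p (k : ℤ_[p]) : MvPowerSeries Unit ℤ_[p])
      = Eser p (a * (k : ℤ_[p])) := by
  apply MvPowerSeries.ext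
  intro d
  refine eq_on_nat_dense
    (f := fun x : ℤ_[p] => MvPowerSeries.coeff d
      (FGL.subst1 (Eser p x) (Eser p (k : ℤ_[p]) : MvPowerSeries Unit ℤ_[p])))
    (g := fun x : ℤ_[p] => MvPowerSeries.coeff d (Eser p (x * (k : ℤ_[p])))) ?_ ?_ ?_ a
  · exact continuous_coeff_subst1_Eser (constantCoeff_Eser (k : ℤ_[p])) d
  · simp only [coeff_unit, coeff_Eser]
    by_cases h : d () = 0
    · simp only [h, if_true, if_pos]
      exact continuous_const
    · simp only [h, if_false]
      exact (PadicInt.continuous_choose (d ())).comp (continuous_mul_right _)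
  · intro m
    exact congrArg (MvPowerSeries.coeff d) (subst1_Eser_Eser_natnat m k)

lemma subst1_Eser_Eser (a b : ℤ_[p]) :
    FGL.subst1 (Eser p a) (Eser p b : MvPowerSeries Unit ℤ_[p]) = Eser p (a * b) := by
  apply MvPowerSeries.ext
  intro d
  refine eq_on_nat_dense
    (f := fun y : ℤ_[p] => MvPowerSeries.coeff d
      (FGL.subst1 (Eser p a) (Eser p y : MvPowerSeries Unit ℤ_[p])))
    (g := fun y : ℤ_[p] => MvPowerSeries.coeff d (Eser p (a * y))) ?_ ?_ ?_ b
  · have h : (fun y : ℤ_[p] => MvPowerSeries.coeff d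
        (FGL.subst1 (Eser p a) (Eser p y : MvPowerSeries Unit ℤ_[p])))
        = fun y => ∑ k ∈ Finset.range (FGL.degSum d + 1),
            PowerSeries.coeff k (Eser p a)
              * MvPowerSeries.coeff d ((Eser p y : MvPowerSeries Unit ℤ_[p]) ^ k) := by
      funext y
      exact coeff_subst1 _ (constantCoeff_Eser y) d le_rfl
    rw [h]
    refine continuous_finset_sum _ fun k _ => continuous_const.mul ?_
    refine continuous_coeff_pow (fun e => ?_) k d
    simp only [coeff_unit, coeff_Eser]
    by_cases hh : e () = 0
    · simp only [hh, if_true, if_pos]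
      exact continuous_const
    · simp only [hh, if_false]
      exact PadicInt.continuous_choose (e ())
  · simp only [coeff_unit, coeff_Eser]
    by_cases h : d () = 0
    · simp only [h, if_true, if_pos]
      exact continuous_const
    · simp only [h, if_false]
      exact (PadicInt.continuous_choose (d ())).comp (continuous_mul_left _)
  · intro m
    exact congrArg (MvPowerSeries.coeff d) (subst1_Eser_Eser_nat a m)

lemma Eser_one : Eser p (1 : ℤ_[p]) = PowerSeries.X := by
  apply PowerSeries.ext
  intro n
  rw [coeff_Eser, PowerSeries.coeff_X,
    show (1 : ℤ_[p]) = ((1 : ℕ) : ℤ_[p]) from by norm_num, Ring.choose_natCast]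
  match n with
  | 0 => simp
  | 1 => simp
  | (n + 2) =>
    rw [if_neg (by omega), if_neg (by omega), Nat.choose_eq_zero_of_lt (by omega)]
    simp

end Padic
end FGLAux

namespace FGLAux
open Finset

variable {σ : Type} {R : Type} [CommRing R]

/-- The exponent `(n, j)` as a `Fin 2 →₀ ℕ`. -/
def ee (n j : ℕ) : Fin 2 →₀ ℕ := Finsupp.single 0 n + Finsupp.single 1 j

lemma ee_apply0 (n j : ℕ) : ee n j 0 = n := by
  simp [ee, Finsupp.single_apply]

lemma ee_apply1 (n j : ℕ) : ee n j 1 = j := by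
  simp [ee, Finsupp.single_apply]

lemma ee_succ_left (n j : ℕ) : ee (n + 1) j = Finsupp.single 0 1 + ee n j := by
  rw [ee, ee, show n + 1 = 1 + n from by omega, Finsupp.single_add, add_assoc]

lemma ee_one_right (n : ℕ) : ee n 1 = Finsupp.single 1 1 + ee n 0 := by
  rw [ee, ee, Finsupp.single_zero, add_zero, add_comm]

lemma ee_succ_one (n : ℕ) :
    ee (n + 1) 1 = (Finsupp.single 0 1 + Finsupp.single 1 1) + ee n 0 := by
  rw [ee_succ_left, ee_one_right, add_assoc]

lemma ee_zero_zero : ee 0 0 = 0 := by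
  simp [ee]

lemma degSum_ee (n j : ℕ) : FGL.degSum (ee n j) = n + j := by
  rw [ee, degSum_add, degSum_single, degSum_single]

lemma not_single0_le (j : ℕ) : ¬ Finsupp.single (0 : Fin 2) 1 ≤ ee 0 j := by
  intro h
  have := Finsupp.le_def.mp h 0
  simp [ee_apply0, Finsupp.single_apply] at this

lemma not_single1_le (n : ℕ) : ¬ Finsupp.single (1 : Fin 2) 1 ≤ ee n 0 := by
  intro h
  have := Finsupp.le_def.mp h 1
  simp [Finsupp.single_apply] at this
  have h2 := ee_apply1 n 0
  omega

lemma not_single01_le (j : ℕ) :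
    ¬ Finsupp.single (0 : Fin 2) 1 + Finsupp.single 1 1 ≤ ee 0 j := by
  intro h
  have := Finsupp.le_def.mp h 0
  have h2 := ee_apply0 0 j
  simp [Finsupp.single_apply] at this
  omega

lemma G_succ (k : ℕ) : (G R) ^ (k + 1)
    = MvPowerSeries.monomial (Finsupp.single 0 1) 1 * (G R) ^ k
      + MvPowerSeries.monomial (Finsupp.single 1 1) 1 * (G R) ^ k
      + MvPowerSeries.monomial (Finsupp.single 0 1 + Finsupp.single 1 1) 1 * (G R) ^ k := by
  have h0 : (MvPowerSeries.X 0 : MvPowerSeries (Fin 2) R)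
      = MvPowerSeries.monomial (Finsupp.single 0 1) 1 := by
    rw [← MvPowerSeries.X_pow_eq, pow_one]
  have h1 : (MvPowerSeries.X 1 : MvPowerSeries (Fin 2) R)
      = MvPowerSeries.monomial (Finsupp.single 1 1) 1 := by
    rw [← MvPowerSeries.X_pow_eq, pow_one]
  rw [pow_succ', G, h0, h1, MvPowerSeries.monomial_mul_monomial, one_mul]
  ring

lemma coeff_G_pow (k : ℕ) :
    (∀ n : ℕ, MvPowerSeries.coeff (ee n 0) ((G R) ^ k) = if n = k then 1 else 0) ∧
    (∀ n : ℕ, MvPowerSeries.coeff (ee n 1) ((G R) ^ k)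
      = (k : R) * ((if n + 1 = k then 1 else 0) + (if n = k then 1 else 0))) := by
  induction k with
  | zero =>
    constructor
    · intro n
      rw [pow_zero, MvPowerSeries.coeff_one]
      by_cases h : n = 0
      · subst h
        rw [if_pos ee_zero_zero, if_pos rfl]
      · rw [if_neg, if_neg h]
        intro h0
        apply h
        have := ee_apply0 n 0
        rw [h0] at this
        simpa using this.symm
    · intro n
      rw [pow_zero, MvPowerSeries.coeff_one, if_neg, Nat.cast_zero, zero_mul]
      intro h0
      have := ee_apply1 n 1
      rw [h0] at this
      simp at this
  | succ k ih =>
    obtain ⟨ihA, ihB⟩ := ih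
    constructor
    · intro n
      rw [G_succ, map_add, map_add]
      cases n with
      | zero =>
        rw [MvPowerSeries.coeff_monomial_mul, if_neg (not_single0_le 0),
          MvPowerSeries.coeff_monomial_mul, if_neg (not_single1_le 0),
          MvPowerSeries.coeff_monomial_mul, if_neg (not_single01_le 0),
          if_neg (by omega)]
        norm_num
      | succ m =>
        have t1 : MvPowerSeries.coeff (ee (m + 1) 0)
            (MvPowerSeries.monomial (Finsupp.single 0 1) 1 * (G R) ^ k)
            = MvPowerSeries.coeff (ee m 0) ((G R) ^ k) := by
          rw [ee_succ_left, MvPowerSeries.coeff_add_monomial_mul, one_mul]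
        have t2 : MvPowerSeries.coeff (ee (m + 1) 0)
            (MvPowerSeries.monomial (Finsupp.single 1 1) 1 * (G R) ^ k) = 0 := by
          rw [MvPowerSeries.coeff_monomial_mul, if_neg (not_single1_le (m + 1))]
        have t3 : MvPowerSeries.coeff (ee (m + 1) 0)
            (MvPowerSeries.monomial (Finsupp.single 0 1 + Finsupp.single 1 1) 1
              * (G R) ^ k) = 0 := by
          rw [MvPowerSeries.coeff_monomial_mul, if_neg]
          intro h
          have := Finsupp.le_def.mp h 1
          have h2 := ee_apply1 (m + 1) 0
          simp [Finsupp.single_apply] at this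
          omega
        rw [t1, t2, t3, ihA m, add_zero, add_zero]
        split_ifs with h1 h2 h2 <;> first | rfl | omega
    · intro n
      rw [G_succ, map_add, map_add]
      cases n with
      | zero =>
        have t2 : MvPowerSeries.coeff (ee 0 1)
            (MvPowerSeries.monomial (Finsupp.single 1 1) 1 * (G R) ^ k)
            = MvPowerSeries.coeff (ee 0 0) ((G R) ^ k) := by
          rw [ee_one_right, MvPowerSeries.coeff_add_monomial_mul, one_mul]
        rw [t2, MvPowerSeries.coeff_monomial_mul, if_neg (not_single0_le 1),
          MvPowerSeries.coeff_monomial_mul, if_neg (not_single01_le 1), ihA 0]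
        by_cases hk : k = 0
        · subst hk
          norm_num
        · rw [if_neg (fun h => hk h.symm), if_neg (by omega), if_neg (by omega)]
          norm_num
      | succ m =>
        have t1 : MvPowerSeries.coeff (ee (m + 1) 1)
            (MvPowerSeries.monomial (Finsupp.single 0 1) 1 * (G R) ^ k)
            = MvPowerSeries.coeff (ee m 1) ((G R) ^ k) := by
          rw [ee_succ_left, MvPowerSeries.coeff_add_monomial_mul, one_mul]
        have t2 : MvPowerSeries.coeff (ee (m + 1) 1)
            (MvPowerSeries.monomial (Finsupp.single 1 1) 1 * (G R) ^ k)
            = MvPowerSeries.coeff (ee (m + 1) 0) ((G R) ^ k) := by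
          rw [ee_one_right, MvPowerSeries.coeff_add_monomial_mul, one_mul]
        have t3 : MvPowerSeries.coeff (ee (m + 1) 1)
            (MvPowerSeries.monomial (Finsupp.single 0 1 + Finsupp.single 1 1) 1
              * (G R) ^ k)
            = MvPowerSeries.coeff (ee m 0) ((G R) ^ k) := by
          rw [ee_succ_one, MvPowerSeries.coeff_add_monomial_mul, one_mul]
        rw [t1, t2, t3, ihB m, ihA (m + 1), ihA m]
        simp only [add_left_inj]
        push_cast
        ring
end FGLAux

namespace FGLAux
open Finset

variable {p : ℕ} [Fact p.Prime]

lemma hom_G {φ : PowerSeries ℤ_[p]} (h : IsFGLHom (FGL.Gm p) (FGL.Gm p) φ) :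
    FGL.subst1 φ (G ℤ_[p]) =
      FGL.subst1 φ (MvPowerSeries.X 0) + FGL.subst1 φ (MvPowerSeries.X 1)
        + FGL.subst1 φ (MvPowerSeries.X 0) * FGL.subst1 φ (MvPowerSeries.X 1) := by
  have hhom : FGL.subst1 φ (G ℤ_[p]) =
      FGL.subst2 (G ℤ_[p]) (FGL.subst1 φ (MvPowerSeries.X (0 : Fin 2)))
        (FGL.subst1 φ (MvPowerSeries.X (1 : Fin 2))) := h.hom
  rw [hhom, subst2_G _ _ (by rw [constantCoeff_subst1]; exact h.constantCoeff_eq_zero)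
    (by rw [constantCoeff_subst1]; exact h.constantCoeff_eq_zero)]

lemma endo_rec {φ : PowerSeries ℤ_[p]} (h : IsFGLHom (FGL.Gm p) (FGL.Gm p) φ)
    (n : ℕ) (hn : 1 ≤ n) :
    ((n : ℤ_[p]) + 1) * PowerSeries.coeff (n + 1) φ
      = (PowerSeries.coeff 1 φ - (n : ℤ_[p])) * PowerSeries.coeff n φ := by
  have key := congrArg (MvPowerSeries.coeff (ee n 1)) (hom_G h)
  rw [coeff_subst1 φ constantCoeff_G (ee n 1) (M := n + 1) (by rw [degSum_ee])] at key
  have hterm : ∀ k ∈ Finset.range (n + 1 + 1),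
      PowerSeries.coeff k φ * MvPowerSeries.coeff (ee n 1) ((G ℤ_[p]) ^ k)
      = (if k = n + 1 then ((n : ℤ_[p]) + 1) * PowerSeries.coeff (n + 1) φ else 0)
        + (if k = n then (n : ℤ_[p]) * PowerSeries.coeff n φ else 0) := by
    intro k _
    rw [(coeff_G_pow k).2 n]
    by_cases h1 : k = n + 1
    · subst h1
      rw [if_pos rfl, if_neg (by omega), if_pos rfl, if_neg (by omega)]
      push_cast
      ring
    · by_cases h2 : k = n
      · subst h2
        rw [if_neg (by omega), if_pos rfl, if_neg h1, if_pos rfl]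
        ring
      · rw [if_neg (by omega), if_neg (by omega), if_neg h1, if_neg h2]
        ring
  rw [Finset.sum_congr rfl hterm, Finset.sum_add_distrib,
    Finset.sum_ite_eq' _ (n + 1), Finset.sum_ite_eq' _ n,
    if_pos (Finset.mem_range.2 (by omega)), if_pos (Finset.mem_range.2 (by omega))] at key
  rw [map_add, map_add] at key
  rw [coeff_subst1_X, coeff_subst1_X] at key
  have hu : ¬ (ee n 1 = Finsupp.single (0 : Fin 2) (ee n 1 0)) := by
    intro h0
    have := DFunLike.congr_fun h0 1
    rw [ee_apply1] at this
    simp [Finsupp.single_apply] at this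
  have hv : ¬ (ee n 1 = Finsupp.single (1 : Fin 2) (ee n 1 1)) := by
    intro h0
    have := DFunLike.congr_fun h0 0
    rw [ee_apply0] at this
    simp [Finsupp.single_apply] at this
    omega
  rw [if_neg hu, if_neg hv] at key
  have huv : MvPowerSeries.coeff (ee n 1)
      (FGL.subst1 φ (MvPowerSeries.X (0 : Fin 2)) * FGL.subst1 φ (MvPowerSeries.X (1 : Fin 2)))
      = PowerSeries.coeff n φ * PowerSeries.coeff 1 φ := by
    rw [MvPowerSeries.coeff_mul]
    have hmem : (Finsupp.single (0 : Fin 2) n, Finsupp.single (1 : Fin 2) 1)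
        ∈ Finset.HasAntidiagonal.antidiagonal (ee n 1) := by
      rw [Finset.HasAntidiagonal.mem_antidiagonal]
      rfl
    have hside : ∀ q ∈ Finset.HasAntidiagonal.antidiagonal (ee n 1),
        q ≠ (Finsupp.single (0 : Fin 2) n, Finsupp.single (1 : Fin 2) 1) →
        MvPowerSeries.coeff q.1 (FGL.subst1 φ (MvPowerSeries.X (0 : Fin 2))) *
          MvPowerSeries.coeff q.2 (FGL.subst1 φ (MvPowerSeries.X (1 : Fin 2))) = 0 := by
      intro q hq hne
      rw [Finset.HasAntidiagonal.mem_antidiagonal] at hq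
      rw [coeff_subst1_X, coeff_subst1_X]
      by_cases h1 : q.1 = Finsupp.single (0 : Fin 2) (q.1 0)
      · by_cases h2 : q.2 = Finsupp.single (1 : Fin 2) (q.2 1)
        · exfalso
          apply hne
          have e0 := DFunLike.congr_fun hq 0
          have e1 := DFunLike.congr_fun hq 1
          rw [Finsupp.add_apply, ee_apply0] at e0
          rw [Finsupp.add_apply, ee_apply1] at e1
          have hq11 : q.1 1 = 0 := by
            rw [h1]
            simp [Finsupp.single_apply]
          have hq20 : q.2 0 = 0 := by
            rw [h2]
            simp [Finsupp.single_apply]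
          have hq10 : q.1 0 = n := by omega
          have hq21 : q.2 1 = 1 := by omega
          have : q = (Finsupp.single (0 : Fin 2) n, Finsupp.single (1 : Fin 2) 1) := by
            rw [Prod.ext_iff]
            constructor
            · rw [h1, hq10]
            · rw [h2, hq21]
          exact this
        · rw [if_neg h2, mul_zero]
      · rw [if_neg h1, zero_mul]
    rw [Finset.sum_eq_single_of_mem _ hmem hside, coeff_subst1_X, coeff_subst1_X]
    simp [Finsupp.single_eq_same]
  rw [huv] at key
  rw [zero_add, zero_add] at key
  linear_combination key

lemma endo_ext {φ ψ : PowerSeries ℤ_[p]}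
    (hφ : IsFGLHom (FGL.Gm p) (FGL.Gm p) φ) (hψ : IsFGLHom (FGL.Gm p) (FGL.Gm p) ψ)
    (h1 : PowerSeries.coeff 1 φ = PowerSeries.coeff 1 ψ) : φ = ψ := by
  apply PowerSeries.ext
  intro n
  induction n with
  | zero =>
    rw [PowerSeries.coeff_zero_eq_constantCoeff, hφ.constantCoeff_eq_zero,
      hψ.constantCoeff_eq_zero]
  | succ m ih =>
    cases m with
    | zero => exact h1
    | succ m' =>
      have hc : ((m' + 1 : ℕ) : ℤ_[p]) + 1 ≠ 0 := by
        rw [show ((m' + 1 : ℕ) : ℤ_[p]) + 1 = ((m' + 2 : ℕ) : ℤ_[p]) from by push_cast; ring]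
        exact Nat.cast_ne_zero.mpr (by omega)
      refine mul_left_cancel₀ hc ?_
      rw [endo_rec hφ (m' + 1) (by omega), endo_rec hψ (m' + 1) (by omega), h1, ih]

end FGLAux

/-- **`End(Ĝ_m) ≅ ℤ_p` and `Aut(Ĝ_m) ≅ ℤ_p^×`.**  For the multiplicative formal group
law `F(X,Y) = X + Y + XY` over `ℤ_p`, taking the linear coefficient is a bijection from
the endomorphisms of `F` onto `ℤ_p`, and an endomorphism is an automorphism (invertible
under composition) precisely when its linear coefficient is a unit of `ℤ_p`. -/
theorem endomorphisms_of_formal_multiplicative_group (p : ℕ) [Fact p.Prime] :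
    Function.Bijective
      (fun φ : {φ : PowerSeries ℤ_[p] // IsFGLHom (FGL.Gm p) (FGL.Gm p) φ} =>
        PowerSeries.coeff 1 φ.val) ∧
    ∀ φ : {φ : PowerSeries ℤ_[p] // IsFGLHom (FGL.Gm p) (FGL.Gm p) φ},
      (∃ ψ : PowerSeries ℤ_[p], IsFGLHom (FGL.Gm p) (FGL.Gm p) ψ ∧
          FGL.subst1 ψ (φ.val : MvPowerSeries Unit ℤ_[p]) = PowerSeries.X ∧
          FGL.subst1 φ.val (ψ : MvPowerSeries Unit ℤ_[p]) = PowerSeries.X) ↔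
        IsUnit (PowerSeries.coeff 1 φ.val) := by
  constructor
  · constructor
    · intro φ ψ h
      exact Subtype.ext (FGLAux.endo_ext φ.2 ψ.2 h)
    · intro a
      exact ⟨⟨FGLAux.Eser p a, FGLAux.isHom_Eser a⟩, FGLAux.coeff1_Eser a⟩
  · intro φ
    constructor
    · rintro ⟨ψ, hψ, hψφ, hφψ⟩
      have key := congrArg (MvPowerSeries.coeff (Finsupp.single () 1)) hψφ
      rw [FGLAux.coeff_subst1 ψ φ.2.constantCoeff_eq_zero (Finsupp.single () 1) (M := 1)
        (by rw [FGLAux.degSum_single])] at key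
      rw [Finset.sum_range_succ, Finset.sum_range_succ, Finset.range_zero,
        Finset.sum_empty] at key
      rw [pow_zero, pow_one, MvPowerSeries.coeff_one,
        if_neg (fun h0 => one_ne_zero (Finsupp.single_eq_zero.mp h0))] at key
      rw [FGLAux.coeff_unit (φ.val) (Finsupp.single () 1),
        FGLAux.coeff_unit (PowerSeries.X) (Finsupp.single () 1)] at key
      rw [Finsupp.single_eq_same, PowerSeries.coeff_one_X] at key
      apply IsUnit.of_mul_eq_one (PowerSeries.coeff 1 ψ)
      linear_combination key
    · intro hu
      obtain ⟨u, hu⟩ := hu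
      have hφ : φ.val = FGLAux.Eser p (↑u : ℤ_[p]) :=
        FGLAux.endo_ext φ.2 (FGLAux.isHom_Eser _)
          (by rw [FGLAux.coeff1_Eser]; exact hu.symm)
      refine ⟨FGLAux.Eser p (↑u⁻¹ : ℤ_[p]), FGLAux.isHom_Eser _, ?_, ?_⟩
      · rw [hφ, FGLAux.subst1_Eser_Eser,
          show ((↑u⁻¹ : ℤ_[p]) * (↑u : ℤ_[p])) = 1 from u.inv_mul, FGLAux.Eser_one]
      · rw [hφ, FGLAux.subst1_Eser_Eser,
          show ((↑u : ℤ_[p]) * (↑u⁻¹ : ℤ_[p])) = 1 from u.mul_inv, FGLAux.Eser_one]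

end
end
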